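/- arXiv:0905.1361 — 3 statements merged into one kernel-verified Lean document; each statement's English description precedes it below -/
import Mathlib

section
/- Let {X(t)} be a uniformly layered walk and fix k≥0; let P_k denote its law started from the uniform distribution on L_k. For all t≥0, all sequences of nonnegative integers k=ℓ(0),…,ℓ(t) satisfying ℓ(s+1)≤ℓ(s)+1 for s=0,…,t−1, and all z∈L_{ℓ(t)}: P_k( X(t)=z | ‖X(s)‖=ℓ(s) for all 0≤s≤t ) = 1/#L_{ℓ(t)} = P_k( X(t)=z | ‖X(t)‖=ℓ(t) ), whenever the conditioning events have positive probability. -/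
open MeasureTheory Filter
open scoped Classical ENNReal

abbrev Z2 : Type := ℤ × ℤ

def origin : Z2 := (0, 0)

def dnorm (x : Z2) : ℕ := x.1.natAbs + x.2.natAbs

def layer (k : ℕ) : Set Z2 := {x | dnorm x = k}

def layerCard (k : ℕ) : ℕ := if k = 0 then 1 else 4 * k

def diamond (r : ℝ) : Set Z2 := {x | (dnorm x : ℝ) ≤ r}

noncomputable def diamondF (n : ℕ) : Finset Z2 :=
  (Finset.Icc (-(n : ℤ), -(n : ℤ)) ((n : ℤ), (n : ℤ))).filter fun x => dnorm x ≤ n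

def vol (n : ℕ) : ℕ := 2 * n * (n + 1) + 1

/-- A uniformly layered walk kernel: a Markov transition kernel on `ℤ²`
satisfying conditions (U1), (U2), (U3). -/
structure IsULW (Q : Z2 → Z2 → ℝ) : Prop where
  nonneg : ∀ x y, 0 ≤ Q x y
  rowSum : ∀ x, ∑' y, Q x y = 1
  u1 : ∀ x y, dnorm x + 1 < dnorm y → Q x y = 0
  u2 : ∀ x, ∃ y, dnorm y = dnorm x + 1 ∧ 0 < Q x y
  u3 : ∀ (k : ℕ) (y z : Z2), dnorm y = dnorm z →
    ∑' x : layer k, Q x.1 y = ∑' x : layer k, Q x.1 z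

/-- `X` is a Markov chain with transition kernel `Q` started at `x0`:
all finite-dimensional distributions are specified. -/
def IsWalkFrom {Ω : Type} [MeasurableSpace Ω] (P : Measure Ω)
    (X : ℕ → Ω → Z2) (Q : Z2 → Z2 → ℝ) (x0 : Z2) : Prop :=
  ∀ (t : ℕ) (path : ℕ → Z2),
    P {ω | ∀ s ≤ t, X s ω = path s} =
      ENNReal.ofReal ((if path 0 = x0 then (1 : ℝ) else 0) *
        ∏ s ∈ Finset.range t, Q (path s) (path (s + 1)))

/-- `X` is a Markov chain with transition kernel `Q` started from the uniform
distribution on layer `L_k`. -/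
def IsWalkUniform {Ω : Type} [MeasurableSpace Ω] (P : Measure Ω)
    (X : ℕ → Ω → Z2) (Q : Z2 → Z2 → ℝ) (k : ℕ) : Prop :=
  ∀ (t : ℕ) (path : ℕ → Z2),
    P {ω | ∀ s ≤ t, X s ω = path s} =
      ENNReal.ofReal ((if dnorm (path 0) = k then (1 : ℝ) / layerCard k else 0) *
        ∏ s ∈ Finset.range t, Q (path s) (path (s + 1)))

/-- The walks `Y 0, Y 1, …` are independent. -/
def IndepWalks {Ω : Type} [MeasurableSpace Ω] (P : Measure Ω)
    (Y : ℕ → ℕ → Ω → Z2) : Prop :=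
  ∀ (I : Finset ℕ) (t : ℕ) (path : ℕ → ℕ → Z2),
    P {ω | ∀ i ∈ I, ∀ s ≤ t, Y i s ω = path i s} =
      ∏ i ∈ I, P {ω | ∀ s ≤ t, Y i s ω = path i s}

/-- Internal DLA clusters built from the walks `Y`:
`gCluster Y k = A(k+1)`, the cluster of `k+1` occupied sites; the walk `Y i`
is the walk performed by the particle producing `A(i+1)` from `A(i)`,
and `Y 0 0` is the position of the very first particle. -/
noncomputable def gCluster {Ω : Type} (Y : ℕ → ℕ → Ω → Z2) : ℕ → Ω → Finset Z2
  | 0 => fun ω => {Y 0 0 ω}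
  | k + 1 => fun ω =>
      insert (Y (k + 1) (sInf {t | Y (k + 1) t ω ∉ gCluster Y k ω}) ω)
        (gCluster Y k ω)

/-- The stopped process at level `n`: `stoppedC Y n k = S(k+1)`; particles also
stop upon reaching layer `L_n`. -/
noncomputable def stoppedC {Ω : Type} (Y : ℕ → ℕ → Ω → Z2) (n : ℕ) : ℕ → Ω → Finset Z2
  | 0 => fun _ => {origin}
  | k + 1 => fun ω =>
      insert (Y (k + 1)
          (sInf {t | Y (k + 1) t ω ∈ layer n ∨ Y (k + 1) t ω ∉ stoppedC Y n k ω}) ω)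
        (stoppedC Y n k ω)

/-- The extended process at level `n`: `extC Y n i = E(i)`, starting from the full
diamond `D_n` and driven by the walks `Y (vol n + i)`. -/
noncomputable def extC {Ω : Type} (Y : ℕ → ℕ → Ω → Z2) (n : ℕ) : ℕ → Ω → Finset Z2
  | 0 => fun _ => diamondF n
  | k + 1 => fun ω =>
      insert (Y (vol n + k) (sInf {t | Y (vol n + k) t ω ∉ extC Y n k ω}) ω)
        (extC Y n k ω)

/-- The outward directed kernel `Q_out`. -/
noncomputable def Qout (x y : Z2) : ℝ :=
  if x = origin then (if dnorm y = 1 then 1 / 4 else 0)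
  else if x.1 ≠ 0 ∧ x.2 ≠ 0 then
    if y = (x.1, x.2 + x.2.sign) then
      ((x.2.natAbs : ℝ) + 1 / 2) / ((x.1.natAbs : ℝ) + (x.2.natAbs : ℝ) + 1)
    else if y = (x.1 + x.1.sign, x.2) then
      ((x.1.natAbs : ℝ) + 1 / 2) / ((x.1.natAbs : ℝ) + (x.2.natAbs : ℝ) + 1)
    else 0
  else if x.2 = 0 then
    if y = (x.1, 1) ∨ y = (x.1, -1) then (1 / 2) / ((x.1.natAbs : ℝ) + 1)
    else if y = (x.1 + x.1.sign, 0) then (x.1.natAbs : ℝ) / ((x.1.natAbs : ℝ) + 1)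
    else 0
  else
    if y = (1, x.2) ∨ y = (-1, x.2) then (1 / 2) / ((x.2.natAbs : ℝ) + 1)
    else if y = (0, x.2 + x.2.sign) then (x.2.natAbs : ℝ) / ((x.2.natAbs : ℝ) + 1)
    else 0

/-- The inward directed kernel `Q_in`. -/
noncomputable def Qin (x y : Z2) : ℝ :=
  if x = origin then (if y = origin then 1 else 0)
  else if x.1 ≠ 0 ∧ x.2 ≠ 0 then
    if y = (x.1, x.2 - x.2.sign) then
      ((x.2.natAbs : ℝ) - 1 / 2) / ((x.1.natAbs : ℝ) + (x.2.natAbs : ℝ) - 1)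
    else if y = (x.1 - x.1.sign, x.2) then
      ((x.1.natAbs : ℝ) - 1 / 2) / ((x.1.natAbs : ℝ) + (x.2.natAbs : ℝ) - 1)
    else 0
  else if x.2 = 0 then
    if y = (x.1 - x.1.sign, 0) then 1 else 0
  else
    if y = (0, x.2 - x.2.sign) then 1 else 0

/-- The interpolating kernel `Q_p = p Q_in + (1-p) Q_out`. -/
noncomputable def Qp (p : ℝ) (x y : Z2) : ℝ := p * Qin x y + (1 - p) * Qout x y

/-- First hitting time of the set `A`, valued in `ℕ∞` (`⊤` when `A` is never visited). -/
noncomputable def hitTimeE {Ω : Type} (X : ℕ → Ω → Z2) (A : Set Z2) (ω : Ω) : ℕ∞ :=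
  sInf ((fun t : ℕ => (t : ℕ∞)) '' {t | X t ω ∈ A})
noncomputable def layerF (m : ℕ) : Finset Z2 :=
  (Finset.Icc (-(m : ℤ), -(m : ℤ)) ((m : ℤ), (m : ℤ))).filter fun x => dnorm x = m

lemma mem_layerF {m : ℕ} {x : Z2} : x ∈ layerF m ↔ dnorm x = m := by
  rw [layerF, Finset.mem_filter]
  simp only [Finset.mem_Icc, Prod.le_def, dnorm]
  omega

lemma card_layerF (m : ℕ) : (layerF m).card = layerCard m := by
  rcases Nat.eq_zero_or_pos m with hm | hm
  · subst hm
    have : layerF 0 = {((0:ℤ),(0:ℤ))} := by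
      ext x
      simp only [mem_layerF, Finset.mem_singleton, dnorm, Prod.ext_iff]
      constructor
      · intro h; constructor <;> omega
      · rintro ⟨h1, h2⟩; omega
    rw [this]; rfl
  · have hfib : ∀ a ∈ Finset.Icc (-(m:ℤ)) m,
        ((layerF m).filter (fun x => x.1 = a)).card = if a.natAbs = m then 1 else 2 := by
      intro a ha
      rw [Finset.mem_Icc] at ha
      by_cases h : a.natAbs = m
      · have : (layerF m).filter (fun x => x.1 = a) = {(a, 0)} := by
          ext x
          simp only [Finset.mem_filter, mem_layerF, Finset.mem_singleton, dnorm, Prod.ext_iff]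
          constructor
          · rintro ⟨h1, h2⟩; exact ⟨h2, by omega⟩
          · rintro ⟨h1, h2⟩; exact ⟨by omega, h1⟩
        rw [this]; simp [h]
      · have : (layerF m).filter (fun x => x.1 = a) =
            {(a, (m:ℤ) - a.natAbs), (a, (a.natAbs : ℤ) - m)} := by
          ext x
          simp only [Finset.mem_filter, mem_layerF, Finset.mem_insert, Finset.mem_singleton,
            dnorm, Prod.ext_iff]
          constructor
          · rintro ⟨h1, h2⟩
            rcases Nat.eq_zero_or_pos x.2.natAbs with h3 | h3
            · left; exact ⟨h2, by omega⟩
            · by_cases h4 : 0 ≤ x.2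
              · left; exact ⟨h2, by omega⟩
              · right; exact ⟨h2, by omega⟩
          · rintro (⟨h1, h2⟩ | ⟨h1, h2⟩) <;> (constructor <;> omega)
        rw [this, Finset.card_insert_of_notMem (by
          simp only [Finset.mem_singleton, Prod.mk.injEq, not_and]
          intro _; omega), Finset.card_singleton, if_neg h]

    have hmem : ∀ x ∈ layerF m, x.1 ∈ Finset.Icc (-(m:ℤ)) m := by
      intro x hx
      rw [mem_layerF] at hx
      rw [Finset.mem_Icc]
      simp only [dnorm] at hx
      omega
    rw [Finset.card_eq_sum_card_fiberwise hmem]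
    rw [Finset.sum_congr rfl hfib]
    rw [Finset.sum_ite]
    have h1 : (Finset.Icc (-(m:ℤ)) m).filter (fun a => a.natAbs = m) = {-(m:ℤ), (m:ℤ)} := by
      ext a
      simp only [Finset.mem_filter, Finset.mem_Icc, Finset.mem_insert, Finset.mem_singleton]
      omega
    have h2 : ((Finset.Icc (-(m:ℤ)) m).filter (fun a => ¬ a.natAbs = m)).card = 2*m - 1 := by
      have := Finset.card_filter_add_card_filter_not
        (s := Finset.Icc (-(m:ℤ)) m) (p := fun a => a.natAbs = m)
      rw [h1] at this
      have hc : (Finset.Icc (-(m:ℤ)) m).card = 2*m+1 := by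
        rw [Int.card_Icc]; omega
      have hc2 : ({-(m:ℤ), (m:ℤ)} : Finset ℤ).card = 2 := by
        rw [Finset.card_insert_of_notMem (by
          simp only [Finset.mem_singleton]; omega), Finset.card_singleton]
      omega
    simp only [Finset.sum_const, smul_eq_mul]
    rw [h1, h2]
    rw [Finset.card_insert_of_notMem (by
      simp only [Finset.mem_singleton]; omega), Finset.card_singleton]
    simp only [layerCard]
    rw [if_neg (by omega)]
    omega

noncomputable def qE (Q : Z2 → Z2 → ℝ) (x y : Z2) : ℝ≥0∞ := ENNReal.ofReal (Q x y)

noncomputable def mu0 (k : ℕ) (x : Z2) : ℝ≥0∞ :=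
  if dnorm x = k then ((layerCard k : ℝ≥0∞))⁻¹ else 0

lemma layerCard_pos (k : ℕ) : 0 < layerCard k := by unfold layerCard; split <;> omega

lemma layerCard_ne_zero (k : ℕ) : (layerCard k : ℝ≥0∞) ≠ 0 := by
  have := layerCard_pos k
  exact Nat.cast_ne_zero.mpr (by omega)

lemma layerCard_ne_top (k : ℕ) : (layerCard k : ℝ≥0∞) ≠ ⊤ := ENNReal.natCast_ne_top _

lemma qE_tsum {Q : Z2 → Z2 → ℝ} (hQ : IsULW Q) (x : Z2) : ∑' y, qE Q x y = 1 := by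
  have h1 := hQ.rowSum x
  have hs : Summable (Q x) := by
    by_contra h
    rw [tsum_eq_zero_of_not_summable h] at h1
    norm_num at h1
  calc ∑' y, qE Q x y = ENNReal.ofReal (∑' y, Q x y) :=
        (ENNReal.ofReal_tsum_of_nonneg (hQ.nonneg x) hs).symm
    _ = 1 := by rw [h1]; simp

lemma tsum_layer_eq_sum (j : ℕ) (g : Z2 → ℝ≥0∞) :
    ∑' x : layer j, g x.1 = ∑ x ∈ layerF j, g x := by
  rw [tsum_subtype (layer j) g]
  rw [tsum_eq_sum (s := layerF j) (fun b hb => Set.indicator_of_notMem (s := layer j)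
    (fun hbm => hb (mem_layerF.mpr hbm)) g)]
  exact Finset.sum_congr rfl fun x hx => Set.indicator_of_mem (s := layer j) (mem_layerF.mp hx) g

lemma tsum_layer_eq_sum_real (j : ℕ) (g : Z2 → ℝ) :
    ∑' x : layer j, g x.1 = ∑ x ∈ layerF j, g x := by
  rw [tsum_subtype (layer j) g]
  rw [tsum_eq_sum (s := layerF j) (fun b hb => Set.indicator_of_notMem (s := layer j)
    (fun hbm => hb (mem_layerF.mpr hbm)) g)]
  exact Finset.sum_congr rfl fun x hx => Set.indicator_of_mem (s := layer j) (mem_layerF.mp hx) g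

lemma u3F {Q : Z2 → Z2 → ℝ} (hQ : IsULW Q) (j : ℕ) {y z : Z2} (h : dnorm y = dnorm z) :
    ∑ x ∈ layerF j, qE Q x y = ∑ x ∈ layerF j, qE Q x z := by
  have h3 := hQ.u3 j y z h
  have hy : ∑' x : layer j, Q x.1 y = ∑ x ∈ layerF j, Q x y :=
    tsum_layer_eq_sum_real j (fun x => Q x y)
  have hz' : ∑' x : layer j, Q x.1 z = ∑ x ∈ layerF j, Q x z :=
    tsum_layer_eq_sum_real j (fun x => Q x z)
  rw [hy, hz'] at h3
  have h4 : ENNReal.ofReal (∑ x ∈ layerF j, Q x y) = ENNReal.ofReal (∑ x ∈ layerF j, Q x z) := by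
    rw [h3]
  rwa [ENNReal.ofReal_sum_of_nonneg (fun i _ => hQ.nonneg i y),
    ENNReal.ofReal_sum_of_nonneg (fun i _ => hQ.nonneg i z)] at h4

lemma mu0_tsum (k : ℕ) : ∑' x, mu0 k x = 1 := by
  rw [tsum_eq_sum (s := layerF k) (fun b hb => by
    simp only [mu0, if_neg (fun h => hb (mem_layerF.mpr h))])]
  have hc : ∑ x ∈ layerF k, mu0 k x = ∑ _x ∈ layerF k, (layerCard k : ℝ≥0∞)⁻¹ :=
    Finset.sum_congr rfl (fun x hx => by simp only [mu0, if_pos (mem_layerF.mp hx)])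
  rw [hc, Finset.sum_const, card_layerF, nsmul_eq_mul]
  exact ENNReal.mul_inv_cancel (layerCard_ne_zero k) (layerCard_ne_top k)

noncomputable def wtE (Q : Z2 → Z2 → ℝ) (k t : ℕ) (f : ℕ → Z2) : ℝ≥0∞ :=
  mu0 k (f 0) * ∏ s ∈ Finset.range t, qE Q (f s) (f (s + 1))

def extp (t : ℕ) (f : Fin (t + 1) → Z2) : ℕ → Z2 :=
  fun s => if h : s < t + 1 then f ⟨s, h⟩ else origin

lemma extp_lt (t : ℕ) (f : Fin (t + 1) → Z2) (s : ℕ) (h : s < t + 1) :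
    extp t f s = f ⟨s, h⟩ := dif_pos h

noncomputable def GG (Q : Z2 → Z2 → ℝ) (k : ℕ) (D : ℕ → Set Z2) : ℕ → Z2 → ℝ≥0∞
  | 0, z => if z ∈ D 0 then mu0 k z else 0
  | (t + 1), z => if z ∈ D (t + 1) then ∑' y, GG Q k D t y * qE Q y z else 0

noncomputable def SS (Q : Z2 → Z2 → ℝ) (k : ℕ) (D : ℕ → Set Z2) (t : ℕ) (z : Z2) : ℝ≥0∞ :=
  ∑' f : Fin (t + 1) → Z2,
    if (∀ s : Fin (t + 1), f s ∈ D s.val) ∧ f (Fin.last t) = z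
    then wtE Q k t (extp t f) else 0

lemma SS_eq_GG (Q : Z2 → Z2 → ℝ) (k : ℕ) (D : ℕ → Set Z2) :
    ∀ t z, SS Q k D t z = GG Q k D t z := by
  intro t
  induction t with
  | zero =>
    intro z
    rw [SS, tsum_eq_single (fun _ : Fin 1 => z) ?side]
    case side =>
      intro f hf
      rw [if_neg]
      rintro ⟨-, h2⟩
      exact hf (funext fun s => by rw [Subsingleton.elim s (Fin.last 0)]; exact h2)
    have h1 : ((∀ s : Fin 1, z ∈ D s.val) ∧ z = z) ↔ z ∈ D 0 := by
      constructor
      · intro h; exact h.1 0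
      · intro h
        refine ⟨fun s => ?_, rfl⟩
        have hs : s.val = 0 := by omega
        rw [hs]; exact h
    rw [GG]
    by_cases h : z ∈ D 0
    · rw [if_pos (h1.mpr h), if_pos h, wtE]
      simp only [Finset.range_zero, Finset.prod_empty, mul_one]
      rw [extp_lt 0 _ 0 (by omega)]
    · rw [if_neg (fun hc => h (h1.mp hc)), if_neg h]
  | succ t ih =>
    intro z
    classical
    set e := Fin.insertNthEquiv (fun _ : Fin (t + 2) => Z2) (Fin.last (t + 1)) with he
    have hfl : ∀ (y : Z2) (g : Fin (t + 1) → Z2), e (y, g) (Fin.last (t + 1)) = y := by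
      intro y g
      rw [he, Fin.insertNthEquiv_apply]
      exact Fin.insertNth_apply_same _ _ _
    have hfc : ∀ (y : Z2) (g : Fin (t + 1) → Z2) (j : Fin (t + 1)),
        e (y, g) (Fin.castSucc j) = g j := by
      intro y g j
      have h1 : Fin.castSucc j = (Fin.last (t + 1)).succAbove j := by
        rw [Fin.succAbove_last]
      rw [h1, he, Fin.insertNthEquiv_apply]
      exact Fin.insertNth_apply_succAbove _ _ _ j
    have hcond : ∀ (y : Z2) (g : Fin (t + 1) → Z2),
        (∀ s : Fin (t + 2), e (y, g) s ∈ D s.val) ↔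
          ((∀ j : Fin (t + 1), g j ∈ D j.val) ∧ y ∈ D (t + 1)) := by
      intro y g
      constructor
      · intro h
        refine ⟨fun j => ?_, ?_⟩
        · have h2 := h (Fin.castSucc j)
          rwa [hfc, Fin.coe_castSucc] at h2
        · have h2 := h (Fin.last (t + 1))
          rwa [hfl] at h2
      · rintro ⟨h1, h2⟩ s
        refine Fin.lastCases ?_ ?_ s
        · rw [hfl]; exact h2
        · intro j
          rw [hfc, Fin.coe_castSucc]; exact h1 j
    have hwt : ∀ (y : Z2) (g : Fin (t + 1) → Z2),
        wtE Q k (t + 1) (extp (t + 1) (e (y, g))) =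
          wtE Q k t (extp t g) * qE Q (g (Fin.last t)) y := by
      intro y g
      have hext : ∀ s : ℕ, s ≤ t → extp (t + 1) (e (y, g)) s = extp t g s := by
        intro s hs
        rw [extp_lt (t + 1) _ s (by omega), extp_lt t g s (by omega)]
        have h1 : (⟨s, by omega⟩ : Fin (t + 2)) = Fin.castSucc ⟨s, by omega⟩ := rfl
        rw [h1, hfc]
      have hlast1 : extp (t + 1) (e (y, g)) t = g (Fin.last t) := by
        rw [hext t le_rfl, extp_lt t g t (by omega)]
        rfl
      have hlast2 : extp (t + 1) (e (y, g)) (t + 1) = y := by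
        rw [extp_lt (t + 1) _ (t + 1) (by omega)]
        have h1 : (⟨t + 1, by omega⟩ : Fin (t + 2)) = Fin.last (t + 1) := rfl
        rw [h1, hfl]
      unfold wtE
      rw [Finset.prod_range_succ, hlast1, hlast2, hext 0 (by omega)]
      have hprod : ∏ x ∈ Finset.range t, qE Q (extp (t + 1) (e (y, g)) x)
            (extp (t + 1) (e (y, g)) (x + 1))
          = ∏ x ∈ Finset.range t, qE Q (extp t g x) (extp t g (x + 1)) :=
        Finset.prod_congr rfl (fun s hs => by
          rw [Finset.mem_range] at hs
          rw [hext s (by omega), hext (s + 1) (by omega)])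
      rw [hprod]
      ring
    rw [SS, ← Equiv.tsum_eq e, ENNReal.tsum_prod']
    have hpt : ∀ (y : Z2) (g : Fin (t + 1) → Z2),
        (if (∀ s : Fin (t + 2), e (y, g) s ∈ D s.val) ∧ e (y, g) (Fin.last (t + 1)) = z
          then wtE Q k (t + 1) (extp (t + 1) (e (y, g))) else 0)
        = if y = z then (if ((∀ j : Fin (t + 1), g j ∈ D j.val) ∧ z ∈ D (t + 1))
            then wtE Q k t (extp t g) * qE Q (g (Fin.last t)) z else 0) else 0 := by
      intro y g
      by_cases hyz : y = z
      · subst hyz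
        rw [if_pos rfl, hwt]
        by_cases hc : (∀ j : Fin (t + 1), g j ∈ D j.val) ∧ y ∈ D (t + 1)
        · rw [if_pos ⟨(hcond y g).mpr hc, hfl y g⟩, if_pos hc]
        · rw [if_neg, if_neg hc]
          rintro ⟨h1, -⟩
          exact hc ((hcond y g).mp h1)
      · rw [if_neg, if_neg hyz]
        rintro ⟨-, h2⟩
        rw [hfl] at h2
        exact hyz h2
    rw [tsum_congr (fun y => tsum_congr (fun g => hpt y g))]
    rw [tsum_eq_single z (fun y hy => by
      rw [tsum_congr (fun g => if_neg hy), tsum_zero])]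
    rw [tsum_congr (fun g => if_pos rfl)]
    by_cases hzD : z ∈ D (t + 1)
    · have step1 : ∀ g : Fin (t + 1) → Z2,
          (if ((∀ j : Fin (t + 1), g j ∈ D j.val) ∧ z ∈ D (t + 1))
            then wtE Q k t (extp t g) * qE Q (g (Fin.last t)) z else 0)
          = ∑' y : Z2, if ((∀ j : Fin (t + 1), g j ∈ D j.val) ∧ g (Fin.last t) = y)
              then wtE Q k t (extp t g) * qE Q y z else 0 := by
        intro g
        rw [tsum_eq_single (g (Fin.last t)) (fun y hy => by
          rw [if_neg]; rintro ⟨-, h2⟩; exact hy h2.symm)]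
        by_cases hc : ∀ j : Fin (t + 1), g j ∈ D j.val
        · rw [if_pos ⟨hc, hzD⟩, if_pos ⟨hc, rfl⟩]
        · rw [if_neg (fun h => hc h.1), if_neg (fun h => hc h.1)]
      rw [tsum_congr step1, ENNReal.tsum_comm]
      have step2 : ∀ y : Z2,
          (∑' g : Fin (t + 1) → Z2, if ((∀ j : Fin (t + 1), g j ∈ D j.val) ∧ g (Fin.last t) = y)
              then wtE Q k t (extp t g) * qE Q y z else 0)
          = SS Q k D t y * qE Q y z := by
        intro y
        rw [SS, ← ENNReal.tsum_mul_right]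
        exact tsum_congr (fun g => by rw [ite_mul, zero_mul])
      rw [tsum_congr step2, GG, if_pos hzD]
      exact tsum_congr (fun y => by rw [ih y])
    · rw [GG, if_neg hzD]
      rw [tsum_congr (fun g => by rw [if_neg (fun h => hzD h.2)]), tsum_zero]

lemma dnorm_rep (j : ℕ) : dnorm ((j : ℤ), (0 : ℤ)) = j := by
  simp [dnorm]

lemma tsum_fiber_layer (h : Z2 → ℝ≥0∞) :
    ∑' y : Z2, h y = ∑' j : ℕ, ∑ y ∈ layerF j, h y := by
  rw [← Equiv.tsum_eq (Equiv.sigmaFiberEquiv dnorm) h, ENNReal.tsum_sigma']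
  exact tsum_congr (fun j => tsum_layer_eq_sum j h)

lemma GG_const {Q : Z2 → Z2 → ℝ} (hQ : IsULW Q) (k : ℕ) (D : ℕ → Set Z2)
    (hD : ∀ (s : ℕ) (y y' : Z2), dnorm y = dnorm y' → (y ∈ D s ↔ y' ∈ D s)) :
    ∀ (t : ℕ) (z z' : Z2), dnorm z = dnorm z' → GG Q k D t z = GG Q k D t z' := by
  intro t
  induction t with
  | zero =>
    intro z z' h
    rw [GG, GG]
    by_cases hz : z ∈ D 0
    · rw [if_pos hz, if_pos ((hD 0 z z' h).mp hz), mu0, mu0, h]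
    · rw [if_neg hz, if_neg (fun hc => hz ((hD 0 z z' h).mpr hc))]
  | succ t ih =>
    intro z z' h
    rw [GG, GG]
    by_cases hz : z ∈ D (t + 1)
    · rw [if_pos hz, if_pos ((hD (t + 1) z z' h).mp hz)]
      have key : ∀ w w' : Z2, dnorm w = dnorm w' →
          ∑' y : Z2, GG Q k D t y * qE Q y w = ∑' y : Z2, GG Q k D t y * qE Q y w' := by
        intro w w' hww
        rw [tsum_fiber_layer (fun y => GG Q k D t y * qE Q y w),
          tsum_fiber_layer (fun y => GG Q k D t y * qE Q y w')]
        refine tsum_congr (fun j => ?_)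
        have hrep : ∀ u : Z2, ∑ y ∈ layerF j, GG Q k D t y * qE Q y u
            = GG Q k D t ((j : ℤ), (0 : ℤ)) * ∑ y ∈ layerF j, qE Q y u := by
          intro u
          rw [Finset.mul_sum]
          refine Finset.sum_congr rfl (fun y hy => ?_)
          rw [ih y ((j : ℤ), (0 : ℤ)) (by rw [mem_layerF.mp hy, dnorm_rep])]
        rw [hrep w, hrep w', u3F hQ j hww]
      exact key z z' h
    · rw [if_neg hz, if_neg (fun hc => hz ((hD (t + 1) z z' h).mpr hc))]

lemma GG_univ_tsum {Q : Z2 → Z2 → ℝ} (hQ : IsULW Q) (k : ℕ) :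
    ∀ t : ℕ, ∑' z : Z2, GG Q k (fun _ => Set.univ) t z = 1 := by
  intro t
  induction t with
  | zero =>
    rw [tsum_congr (fun z => by rw [GG, if_pos (Set.mem_univ z)])]
    exact mu0_tsum k
  | succ t ih =>
    rw [tsum_congr (fun z => by rw [GG, if_pos (Set.mem_univ z)])]
    rw [ENNReal.tsum_comm]
    rw [tsum_congr (fun y => ENNReal.tsum_mul_left)]
    rw [tsum_congr (fun y => by rw [qE_tsum hQ y, mul_one])]
    exact ih

lemma wt_total {Q : Z2 → Z2 → ℝ} (hQ : IsULW Q) (k t : ℕ) :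
    ∑' f : Fin (t + 1) → Z2, wtE Q k t (extp t f) = 1 := by
  have h1 : ∀ f : Fin (t + 1) → Z2, wtE Q k t (extp t f)
      = ∑' z : Z2, if (∀ s : Fin (t + 1), f s ∈ (Set.univ : Set Z2)) ∧ f (Fin.last t) = z
          then wtE Q k t (extp t f) else 0 := by
    intro f
    rw [tsum_eq_single (f (Fin.last t)) (fun z hz => by
      rw [if_neg]; rintro ⟨-, h2⟩; exact hz h2.symm)]
    rw [if_pos ⟨fun s => Set.mem_univ _, rfl⟩]
  rw [tsum_congr h1, ENNReal.tsum_comm]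
  have h2 : ∀ z : Z2, ∑' f : Fin (t + 1) → Z2,
      (if (∀ s : Fin (t + 1), f s ∈ (Set.univ : Set Z2)) ∧ f (Fin.last t) = z
        then wtE Q k t (extp t f) else 0) = GG Q k (fun _ => Set.univ) t z := by
    intro z
    rw [← SS_eq_GG, SS]
    exact tsum_congr fun f => by
      by_cases hc : (∀ s : Fin (t + 1), f s ∈ (Set.univ : Set Z2)) ∧ f (Fin.last t) = z
      · rw [if_pos hc, if_pos hc]
      · rw [if_neg hc, if_neg hc]
  rw [tsum_congr h2]
  exact GG_univ_tsum hQ k t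

lemma partition_pieces {Ω : Type} [MeasurableSpace Ω] (P : Measure Ω) [IsProbabilityMeasure P]
    {ι : Type} [Countable ι] (E : ι → Set Ω)
    (hdis : ∀ i j, i ≠ j → E i ∩ E j = ∅)
    (hcov : ∀ ω, ∃ i, ω ∈ E i)
    (hsum : ∑' i, P (E i) = 1) :
    (∀ i, NullMeasurableSet (E i) P) ∧
      (∀ J : Set ι, P (⋃ i ∈ J, E i) = ∑' i : J, P (E i)) := by
  constructor
  · intro i
    set T : ι → Set Ω := fun j => toMeasurable P (E j) with hT
    set U : Set Ω := ⋃ j, (if j = i then ∅ else T j) with hU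
    have hUm : MeasurableSet U := MeasurableSet.iUnion (fun j => by
      split_ifs
      · exact MeasurableSet.empty
      · exact measurableSet_toMeasurable _ _)
    have hUle : P U ≤ ∑' j, if j = i then 0 else P (E j) := by
      refine le_trans (measure_iUnion_le _) (ENNReal.tsum_le_tsum (fun j => ?_))
      split_ifs
      · simp
      · rw [measure_toMeasurable]
    have hsplit : P (E i) + ∑' j, (if j = i then 0 else P (E j)) = 1 := by
      have ha : ∑' j, (if j = i then P (E j) else 0) = P (E i) := by
        rw [tsum_eq_single i (fun j hj => if_neg hj), if_pos rfl]
      rw [← ha, ← ENNReal.tsum_add, ← hsum]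
      exact tsum_congr (fun j => by split_ifs <;> simp)
    have hcup : P (T i ∪ U) = 1 := by
      apply le_antisymm prob_le_one
      have : (Set.univ : Set Ω) ⊆ T i ∪ U := by
        intro ω _
        obtain ⟨j, hj⟩ := hcov ω
        by_cases hji : j = i
        · left; exact subset_toMeasurable _ _ (hji ▸ hj)
        · right
          refine Set.mem_iUnion.mpr ⟨j, ?_⟩
          rw [if_neg hji]
          exact subset_toMeasurable _ _ hj
      calc (1 : ℝ≥0∞) = P Set.univ := (measure_univ).symm
        _ ≤ P (T i ∪ U) := measure_mono this
    have hinter : P (T i ∩ U) = 0 := by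
      have h5 := measure_union_add_inter (μ := P) (T i) hUm
      rw [hcup] at h5
      have h6 : P (T i) = P (E i) := measure_toMeasurable _
      have h7 : 1 + P (T i ∩ U) ≤ 1 := by
        rw [h5, h6]
        calc P (E i) + P U ≤ P (E i) + ∑' j, (if j = i then 0 else P (E j)) :=
              add_le_add_right hUle _
          _ = 1 := hsplit
      have h8 : P (T i ∩ U) ≤ 0 :=
        (ENNReal.add_le_add_iff_left (a := (1 : ℝ≥0∞)) ENNReal.one_ne_top).mp
          (by rw [add_zero]; exact h7)
      exact le_antisymm h8 zero_le
    have hdiff : P (T i \ E i) = 0 := by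
      refine measure_mono_null ?_ hinter
      intro ω hω
      obtain ⟨j, hj⟩ := hcov ω
      have hji : j ≠ i := fun h => hω.2 (h ▸ hj)
      exact ⟨hω.1, Set.mem_iUnion.mpr ⟨j, by rw [if_neg hji]; exact subset_toMeasurable _ _ hj⟩⟩
    refine NullMeasurableSet.congr
      ((measurableSet_toMeasurable P (E i)).nullMeasurableSet) ?_
    apply Filter.EventuallyEq.symm
    rw [ae_eq_set]
    constructor
    · have : E i \ T i = ∅ := Set.diff_eq_empty.mpr (subset_toMeasurable _ _)
      rw [this, measure_empty]
    · exact hdiff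
  · intro J
    apply le_antisymm
    · exact measure_biUnion_le P (Set.to_countable J) E
    · have hsplit : (∑' i : J, P (E i)) + ∑' i : ↥(Jᶜ), P (E i) = 1 := by
        rw [Summable.tsum_add_tsum_compl (f := fun i => P (E i)) ENNReal.summable ENNReal.summable, hsum]
      have hfin : ∑' i : ↥(Jᶜ), P (E i) ≠ ⊤ := by
        intro h
        rw [h, add_top] at hsplit
        exact ENNReal.one_ne_top hsplit.symm
      have hcup : (1 : ℝ≥0∞) ≤ P (⋃ i ∈ J, E i) + ∑' i : ↥(Jᶜ), P (E i) := by
        have hsub : (Set.univ : Set Ω) ⊆ (⋃ i ∈ J, E i) ∪ (⋃ i ∈ Jᶜ, E i) := by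
          intro ω _
          obtain ⟨i, hi⟩ := hcov ω
          by_cases hiJ : i ∈ J
          · left; exact Set.mem_biUnion hiJ hi
          · right; exact Set.mem_biUnion hiJ hi
        calc (1 : ℝ≥0∞) = P Set.univ := (measure_univ).symm
          _ ≤ P ((⋃ i ∈ J, E i) ∪ (⋃ i ∈ Jᶜ, E i)) := measure_mono hsub
          _ ≤ P (⋃ i ∈ J, E i) + P (⋃ i ∈ Jᶜ, E i) := measure_union_le _ _
          _ ≤ P (⋃ i ∈ J, E i) + ∑' i : ↥(Jᶜ), P (E i) :=
              add_le_add_right (measure_biUnion_le P (Set.to_countable _) E) _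
      rw [← hsplit] at hcup
      exact (ENNReal.add_le_add_iff_right hfin).mp hcup

lemma cyl_measure {Ω : Type} [MeasurableSpace Ω] (P : Measure Ω) (X : ℕ → Ω → Z2)
    {Q : Z2 → Z2 → ℝ} {k : ℕ} (hwalk : IsWalkUniform P X Q k) (hQ : IsULW Q)
    (t : ℕ) (g : ℕ → Z2) :
    P {ω | ∀ s ≤ t, X s ω = g s} = wtE Q k t g := by
  rw [hwalk t g, wtE]
  rw [ENNReal.ofReal_mul (by positivity)]
  congr 1
  · by_cases h : dnorm (g 0) = k
    · rw [if_pos h, mu0, if_pos h, one_div, ENNReal.ofReal_inv_of_pos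
        (by exact_mod_cast layerCard_pos k), ENNReal.ofReal_natCast]
    · rw [if_neg h, mu0, if_neg h, ENNReal.ofReal_zero]
  · exact ENNReal.ofReal_prod_of_nonneg (fun i _ => hQ.nonneg _ _)

lemma key_cond {Ω : Type} [MeasurableSpace Ω] (P : Measure Ω) [IsProbabilityMeasure P]
    (Q : Z2 → Z2 → ℝ) (hQ : IsULW Q) (k : ℕ)
    (X : ℕ → Ω → Z2) (hwalk : IsWalkUniform P X Q k)
    (t m : ℕ) (D : ℕ → Set Z2)
    (hD : ∀ (s : ℕ) (y y' : Z2), dnorm y = dnorm y' → (y ∈ D s ↔ y' ∈ D s))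
    (z : Z2) (hz : dnorm z = m)
    (hne : P {ω | (∀ s ≤ t, X s ω ∈ D s) ∧ dnorm (X t ω) = m} ≠ 0) :
    ProbabilityTheory.cond P {ω | (∀ s ≤ t, X s ω ∈ D s) ∧ dnorm (X t ω) = m} {ω | X t ω = z}
      = 1 / (layerCard m : ℝ≥0∞) := by
  classical
  set E : (Fin (t + 1) → Z2) → Set Ω := fun f => {ω | ∀ s ≤ t, X s ω = extp t f s} with hE
  have hmeas : ∀ f, P (E f) = wtE Q k t (extp t f) :=
    fun f => cyl_measure P X hwalk hQ t (extp t f)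
  have hcov : ∀ ω, ∃ f, ω ∈ E f := by
    intro ω
    refine ⟨fun s => X s.val ω, fun s hs => ?_⟩
    rw [extp_lt t _ s (by omega)]
  have htraj : ∀ (f : Fin (t + 1) → Z2) (ω : Ω), ω ∈ E f →
      ∀ s : Fin (t + 1), X s.val ω = f s := by
    intro f ω hω s
    have h1 := hω s.val (by omega)
    rwa [extp_lt t f s.val s.isLt, Fin.eta] at h1
  have hdis : ∀ f g, f ≠ g → E f ∩ E g = ∅ := by
    intro f g hfg
    rw [Set.eq_empty_iff_forall_notMem]
    rintro ω ⟨h1, h2⟩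
    exact hfg (funext fun s => by rw [← htraj f ω h1 s, htraj g ω h2 s])
  have hsum : ∑' f, P (E f) = 1 := by
    rw [tsum_congr hmeas]; exact wt_total hQ k t
  obtain ⟨hNM, hAdd⟩ := partition_pieces P E hdis hcov hsum
  set J : Set (Fin (t + 1) → Z2) :=
    {f | (∀ s : Fin (t + 1), f s ∈ D s.val) ∧ dnorm (f (Fin.last t)) = m} with hJ
  set Jz : Set (Fin (t + 1) → Z2) :=
    {f | (∀ s : Fin (t + 1), f s ∈ D s.val) ∧ f (Fin.last t) = z} with hJz
  have hAJ : {ω | (∀ s ≤ t, X s ω ∈ D s) ∧ dnorm (X t ω) = m} = ⋃ f ∈ J, E f := by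
    ext ω
    constructor
    · rintro ⟨h1, h2⟩
      refine Set.mem_iUnion₂.mpr ⟨fun s : Fin (t + 1) => X s.val ω,
        ⟨fun s => h1 s.val (by omega), ?_⟩, fun s hs => by rw [extp_lt t _ s (by omega)]⟩
      show dnorm (X (Fin.last t).val ω) = m
      rw [Fin.val_last]
      exact h2
    · intro hmem
      obtain ⟨f, hfJ, hω⟩ := Set.mem_iUnion₂.mp hmem
      constructor
      · intro s hs
        have := htraj f ω hω ⟨s, by omega⟩
        rw [this]
        exact hfJ.1 ⟨s, by omega⟩
      · have := htraj f ω hω (Fin.last t)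
        rw [Fin.val_last] at this
        rw [this]
        exact hfJ.2
  have hBz : {ω | X t ω = z} ∩ {ω | (∀ s ≤ t, X s ω ∈ D s) ∧ dnorm (X t ω) = m}
      = ⋃ f ∈ Jz, E f := by
    ext ω
    constructor
    · rintro ⟨hz2, h1, h2⟩
      refine Set.mem_iUnion₂.mpr ⟨fun s : Fin (t + 1) => X s.val ω,
        ⟨fun s => h1 s.val (by omega), ?_⟩, fun s hs => by rw [extp_lt t _ s (by omega)]⟩
      show X (Fin.last t).val ω = z
      rw [Fin.val_last]
      exact hz2
    · intro hmem
      obtain ⟨f, hfJ, hω⟩ := Set.mem_iUnion₂.mp hmem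
      have hXt : X t ω = f (Fin.last t) := by
        have := htraj f ω hω (Fin.last t)
        rwa [Fin.val_last] at this
      refine ⟨show X t ω = z by rw [hXt]; exact hfJ.2, fun s hs => ?_, ?_⟩
      · have := htraj f ω hω ⟨s, by omega⟩
        rw [this]
        exact hfJ.1 ⟨s, by omega⟩
      · show dnorm (X t ω) = m
        rw [hXt, hfJ.2, hz]
  have hPJz : P (⋃ f ∈ Jz, E f) = GG Q k D t z := by
    rw [hAdd Jz, ← SS_eq_GG, SS]
    rw [tsum_subtype Jz (fun f => P (E f))]
    refine tsum_congr (fun f => ?_)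
    rw [Set.indicator_apply]
    by_cases hf : f ∈ Jz
    · rw [if_pos hf, hmeas,
        if_pos (show (∀ s : Fin (t + 1), f s ∈ D s.val) ∧ f (Fin.last t) = z from hf)]
    · rw [if_neg hf,
        if_neg (show ¬((∀ s : Fin (t + 1), f s ∈ D s.val) ∧ f (Fin.last t) = z) from hf)]
  have hPJ : P (⋃ f ∈ J, E f) = (layerCard m : ℝ≥0∞) * GG Q k D t z := by
    rw [hAdd J]
    rw [tsum_subtype J (fun f => P (E f))]
    have hstep : ∀ f : Fin (t + 1) → Z2, J.indicator (fun f => P (E f)) f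
        = ∑ z' ∈ layerF m, (if (∀ s : Fin (t + 1), f s ∈ D s.val) ∧ f (Fin.last t) = z'
            then wtE Q k t (extp t f) else 0) := by
      intro f
      rw [Set.indicator_apply]
      by_cases hf : f ∈ J
      · rw [if_pos hf, hmeas]
        have hre : ∀ z' ∈ layerF m,
            (if (∀ s : Fin (t + 1), f s ∈ D s.val) ∧ f (Fin.last t) = z'
              then wtE Q k t (extp t f) else 0)
            = if f (Fin.last t) = z' then wtE Q k t (extp t f) else 0 := by
          intro z' _
          by_cases h : f (Fin.last t) = z'
          · rw [if_pos h, if_pos ⟨hf.1, h⟩]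
          · rw [if_neg h, if_neg (fun hc => h hc.2)]
        rw [Finset.sum_congr rfl hre, Finset.sum_ite_eq (layerF m) (f (Fin.last t))]
        rw [if_pos (mem_layerF.mpr hf.2)]
      · rw [if_neg hf]
        symm
        refine Finset.sum_eq_zero (fun z' hz' => ?_)
        rw [if_neg]
        rintro ⟨h1, h2⟩
        exact hf ⟨h1, by rw [h2]; exact mem_layerF.mp hz'⟩
    rw [tsum_congr hstep, Summable.tsum_finsetSum (fun _ _ => ENNReal.summable)]
    have hSS : ∀ z' ∈ layerF m, (∑' f : Fin (t + 1) → Z2,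
        if (∀ s : Fin (t + 1), f s ∈ D s.val) ∧ f (Fin.last t) = z'
          then wtE Q k t (extp t f) else 0) = GG Q k D t z := by
      intro z' hz'
      have hL : (∑' f : Fin (t + 1) → Z2,
          if (∀ s : Fin (t + 1), f s ∈ D s.val) ∧ f (Fin.last t) = z'
            then wtE Q k t (extp t f) else 0) = SS Q k D t z' := rfl
      rw [hL, SS_eq_GG]
      exact GG_const hQ k D hD t z' z (by rw [mem_layerF.mp hz', hz])
    rw [Finset.sum_congr rfl hSS, Finset.sum_const, card_layerF, nsmul_eq_mul]
  have hNMA : NullMeasurableSet {ω | (∀ s ≤ t, X s ω ∈ D s) ∧ dnorm (X t ω) = m} P := by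
    rw [hAJ]
    exact NullMeasurableSet.iUnion (fun f => NullMeasurableSet.iUnion (fun _ => hNM f))
  have hG_ne_top : GG Q k D t z ≠ ⊤ := by
    rw [← hPJz]
    exact (lt_of_le_of_lt prob_le_one ENNReal.one_lt_top).ne
  have hG_ne_zero : GG Q k D t z ≠ 0 := by
    intro h0
    apply hne
    rw [hAJ, hPJ, h0, mul_zero]
  rw [ProbabilityTheory.cond]
  rw [Measure.smul_apply, Measure.restrict_apply₀' hNMA, smul_eq_mul]
  rw [hBz, hPJz, hAJ, hPJ]
  rw [ENNReal.mul_inv (Or.inl (layerCard_ne_zero m)) (Or.inl (layerCard_ne_top m))]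
  rw [mul_assoc, ENNReal.inv_mul_cancel hG_ne_zero hG_ne_top, mul_one, one_div]


/-- **Lemma (uniformity on layers).** Under `P_k` (the walk started uniformly on `L_k`),
conditionally on the layer process, `X(t)` is uniform on its layer:
`P_k(X(t)=z ∣ ‖X(s)‖=ℓ(s), 0≤s≤t) = 1/#L_{ℓ(t)} = P_k(X(t)=z ∣ ‖X(t)‖=ℓ(t))`. -/
theorem statement4
    {Ω : Type} [MeasurableSpace Ω] (P : Measure Ω) [IsProbabilityMeasure P]
    (Q : Z2 → Z2 → ℝ) (hQ : IsULW Q) (k : ℕ)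
    (X : ℕ → Ω → Z2) (hwalk : IsWalkUniform P X Q k)
    (t : ℕ) (ℓ : ℕ → ℕ) (hk : ℓ 0 = k)
    (hstep : ∀ s < t, ℓ (s + 1) ≤ ℓ s + 1)
    (z : Z2) (hz : dnorm z = ℓ t)
    (h1 : P {ω | ∀ s ≤ t, dnorm (X s ω) = ℓ s} ≠ 0)
    (h2 : P {ω | dnorm (X t ω) = ℓ t} ≠ 0) :
    ProbabilityTheory.cond P {ω | ∀ s ≤ t, dnorm (X s ω) = ℓ s} {ω | X t ω = z}
        = 1 / (layerCard (ℓ t) : ℝ≥0∞) ∧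
    ProbabilityTheory.cond P {ω | dnorm (X t ω) = ℓ t} {ω | X t ω = z}
        = 1 / (layerCard (ℓ t) : ℝ≥0∞) := by
  constructor
  · have hset : {ω : Ω | ∀ s ≤ t, dnorm (X s ω) = ℓ s}
        = {ω : Ω | (∀ s ≤ t, X s ω ∈ layer (ℓ s)) ∧ dnorm (X t ω) = ℓ t} := by
      ext ω
      constructor
      · intro h
        exact ⟨fun s hs => h s hs, h t le_rfl⟩
      · intro h s hs
        exact h.1 s hs
    rw [hset]
    rw [hset] at h1
    exact key_cond P Q hQ k X hwalk t (ℓ t) (fun s => layer (ℓ s))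
      (fun s y y' hyy => by simp only [layer, Set.mem_setOf_eq, hyy]) z hz h1
  · have hset : {ω : Ω | dnorm (X t ω) = ℓ t}
        = {ω : Ω | (∀ s ≤ t, X s ω ∈ (Set.univ : Set Z2)) ∧ dnorm (X t ω) = ℓ t} := by
      ext ω
      simp
    rw [hset]
    rw [hset] at h2
    exact key_cond P Q hQ k X hwalk t (ℓ t) (fun _ => Set.univ)
      (fun s y y' _ => Iff.rfl) z hz h2
end

section
/- (Abelian property of Diaconis–Fulton dynamics.) Suppose at each site x∈ℤ² there is an infinite stack of cards, each labeled by a site of ℤ². Start from any particle configuration on ℤ² (a function assigning a finite number of particles in total to the sites). A legal move consists of choosing a site x currently occupied by at least two particles, burning (removing) the top card of the stack at x, and moving one particle from x to the site labeled by the burned card. A finite sequence of legal moves is complete if it results in a configuration in which each site has at most one particle. Then: if there is a complete finite sequence of legal moves, every sequence of legal moves is finite, and any two complete sequences of legal moves result in the same final configuration. -/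
open MeasureTheory Filter
open scoped Classical ENNReal

/-- A state of the Diaconis–Fulton dynamics: a particle configuration `η : ℤ² → ℕ`
together with, at each site, the number of cards already burned.  A move at `x`
burns the top unburned card `σc x (c x)` at `x` and moves one particle from `x`
to the site that card names. -/
def applyMove (σc : Z2 → ℕ → Z2) (s : (Z2 → ℕ) × (Z2 → ℕ)) (x : Z2) :
    (Z2 → ℕ) × (Z2 → ℕ) :=
  ((fun w => (if w = x then s.1 w - 1 else s.1 w) + (if w = σc x (s.2 x) then 1 else 0)),
   fun w => if w = x then s.2 w + 1 else s.2 w)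

/-- A list of sites is a legal sequence of moves from the state `s` if each successive
move is made from a site occupied by at least two particles. -/
def LegalSeq (σc : Z2 → ℕ → Z2) : (Z2 → ℕ) × (Z2 → ℕ) → List Z2 → Prop
  | _, [] => True
  | s, x :: L => 2 ≤ s.1 x ∧ LegalSeq σc (applyMove σc s x) L

section AbelianAux

variable (σc : Z2 → ℕ → Z2)

lemma applyMove_fst_le (s : (Z2 → ℕ) × (Z2 → ℕ)) (x y : Z2) (hxy : y ≠ x) :
    s.1 y ≤ (applyMove σc s x).1 y := by
  simp only [applyMove, if_neg hxy]
  exact Nat.le_add_right _ _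

lemma count_mono : ∀ (L : List Z2) (s : (Z2 → ℕ) × (Z2 → ℕ)) (x : Z2), x ∉ L →
    s.1 x ≤ (L.foldl (applyMove σc) s).1 x
  | [], _, _, _ => le_refl _
  | y :: T, s, x, hx => by
      have hxy : x ≠ y := fun h => hx (h ▸ List.mem_cons_self)
      have h1 : s.1 x ≤ (applyMove σc s y).1 x := applyMove_fst_le σc s y x hxy
      have h2 := count_mono T (applyMove σc s y) x (fun h => hx (List.mem_cons_of_mem _ h))
      simpa using h1.trans h2

lemma burn_commute (s : (Z2 → ℕ) × (Z2 → ℕ)) (x y : Z2)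
    (hxy : x ≠ y) (hx : 2 ≤ s.1 x) (hy : 2 ≤ s.1 y) :
    applyMove σc (applyMove σc s x) y = applyMove σc (applyMove σc s y) x := by
  have h2x : (applyMove σc s x).2 y = s.2 y := by
    simp [applyMove, hxy.symm]
  have h2y : (applyMove σc s y).2 x = s.2 x := by
    simp [applyMove, hxy]
  refine Prod.ext ?_ ?_
  · funext w
    show (if w = y then (applyMove σc s x).1 w - 1 else (applyMove σc s x).1 w)
        + (if w = σc y ((applyMove σc s x).2 y) then 1 else 0)
      = (if w = x then (applyMove σc s y).1 w - 1 else (applyMove σc s y).1 w)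
        + (if w = σc x ((applyMove σc s y).2 x) then 1 else 0)
    rw [h2x, h2y]
    simp only [applyMove]
    rcases eq_or_ne w x with rfl | hwx <;> rcases eq_or_ne w y with rfl | hwy
    · exact absurd rfl hxy
    · simp only [if_pos rfl, if_neg hwy, if_neg hxy]
      split_ifs <;> omega
    · simp only [if_pos rfl, if_neg hwx, if_neg hxy.symm]
      split_ifs <;> omega
    · simp only [if_neg hwx, if_neg hwy]
      split_ifs <;> omega
  · funext w
    show (if w = y then (applyMove σc s x).2 w + 1 else (applyMove σc s x).2 w)
      = (if w = x then (applyMove σc s y).2 w + 1 else (applyMove σc s y).2 w)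
    simp only [applyMove]
    rcases eq_or_ne w x with rfl | hwx <;> rcases eq_or_ne w y with rfl | hwy <;>
      simp_all

lemma my_perm_cons_erase : ∀ {L : List Z2} {x : Z2}, x ∈ L → L.Perm (x :: L.erase x)
  | y :: T, x, h => by
      rcases eq_or_ne y x with rfl | hyx
      · rw [List.erase_cons_head]
      · have hxT : x ∈ T := by
          rcases List.mem_cons.mp h with h | h
          · exact absurd h.symm hyx
          · exact h
        rw [List.erase_cons_tail (by simp [hyx])]
        exact ((my_perm_cons_erase hxT).cons y).trans (List.Perm.swap x y _)

lemma perm_front : ∀ (L : List Z2) (s : (Z2 → ℕ) × (Z2 → ℕ)) (x : Z2),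
    LegalSeq σc s L → x ∈ L → 2 ≤ s.1 x →
    LegalSeq σc s (x :: L.erase x) ∧
    (x :: L.erase x).foldl (applyMove σc) s = L.foldl (applyMove σc) s
  | [], _, _, _, hmem, _ => absurd hmem List.not_mem_nil
  | y :: T, s, x, hL, hmem, hx => by
      rcases eq_or_ne y x with rfl | hyx
      · rw [List.erase_cons_head]
        exact ⟨hL, rfl⟩
      · have hxT : x ∈ T := by
          rcases List.mem_cons.mp hmem with h | h
          · exact absurd h.symm hyx
          · exact h
        obtain ⟨hy, hT⟩ := hL
        have hx' : 2 ≤ (applyMove σc s y).1 x :=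
          hx.trans (applyMove_fst_le σc s y x hyx.symm)
        obtain ⟨⟨_, hTe⟩, hfold⟩ := perm_front T (applyMove σc s y) x hT hxT hx'
        have hcomm := burn_commute σc s y x hyx hy hx
        have hy' : 2 ≤ (applyMove σc s x).1 y :=
          hy.trans (applyMove_fst_le σc s x y hyx)
        rw [List.erase_cons_tail (by simp [hyx])]
        constructor
        · exact ⟨hx, hy', by rw [← hcomm]; exact hTe⟩
        · show ((y :: T.erase x).foldl (applyMove σc) (applyMove σc s x))
            = T.foldl (applyMove σc) (applyMove σc s y)
          have : (T.erase x).foldl (applyMove σc) (applyMove σc (applyMove σc s y) x)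
              = T.foldl (applyMove σc) (applyMove σc s y) := hfold
          simpa [List.foldl_cons, hcomm] using this

lemma multiset_le : ∀ (M : List Z2) (s : (Z2 → ℕ) × (Z2 → ℕ)) (L : List Z2),
    LegalSeq σc s L → (∀ z, (L.foldl (applyMove σc) s).1 z ≤ 1) →
    LegalSeq σc s M → (↑M : Multiset Z2) ≤ ↑L
  | [], _, _, _, _, _ => by simp
  | x :: M', s, L, hL, hcomp, hM => by
      obtain ⟨hx, hM'⟩ := hM
      have hxL : x ∈ L := by
        by_contra hxn
        have := (count_mono σc L s x hxn)
        have := hcomp x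
        omega
      obtain ⟨⟨_, hLe⟩, hfold⟩ := perm_front σc L s x hL hxL hx
      have hcomp' : ∀ z, ((L.erase x).foldl (applyMove σc) (applyMove σc s x)).1 z ≤ 1 := by
        intro z
        have : ((L.erase x).foldl (applyMove σc) (applyMove σc s x))
            = L.foldl (applyMove σc) s := by simpa using hfold
        rw [this]; exact hcomp z
      have hle := multiset_le M' (applyMove σc s x) (L.erase x) hLe hcomp' hM'
      calc (↑(x :: M') : Multiset Z2) = x ::ₘ (↑M' : Multiset Z2) := rfl
        _ ≤ x ::ₘ (↑(L.erase x) : Multiset Z2) := Multiset.cons_le_cons _ hle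
        _ = ↑L := Multiset.coe_eq_coe.mpr (my_perm_cons_erase hxL).symm

lemma foldl_eq_of_perm : ∀ (M : List Z2) (s : (Z2 → ℕ) × (Z2 → ℕ)) (L : List Z2),
    LegalSeq σc s M → LegalSeq σc s L → (↑M : Multiset Z2) = ↑L →
    M.foldl (applyMove σc) s = L.foldl (applyMove σc) s
  | [], _, L, _, _, hml => by
      have : L = [] := by simpa using hml.symm
      subst this; rfl
  | x :: M', s, L, hM, hL, hml => by
      obtain ⟨hx, hM'⟩ := hM
      have hxL : x ∈ L := by
        have : x ∈ (↑L : Multiset Z2) := by rw [← hml]; simp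
        simpa using this
      obtain ⟨⟨_, hLe⟩, hfold⟩ := perm_front σc L s x hL hxL hx
      have herase : (↑M' : Multiset Z2) = ↑(L.erase x) := by
        have h1 : (x ::ₘ (↑M' : Multiset Z2)) = x ::ₘ (↑(L.erase x) : Multiset Z2) := by
          rw [show (x ::ₘ (↑M' : Multiset Z2)) = ↑(x :: M') from rfl, hml]
          exact Multiset.coe_eq_coe.mpr (my_perm_cons_erase hxL)
        exact (Multiset.cons_inj_right x).mp h1
      have := foldl_eq_of_perm M' (applyMove σc s x) (L.erase x) hM' hLe herase
      rw [← hfold]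
      simpa using this

end AbelianAux

/-- **Abelian property.** Start from a particle configuration `η` with finitely many
particles, with unburned stacks.  If there is a complete finite sequence of legal
moves (one whose final configuration has at most one particle per site), then
every sequence of legal moves is finite (there is no infinite legal sequence), and
any complete sequence of legal moves results in the same final configuration. -/
theorem statement8
    (σc : Z2 → ℕ → Z2) (η : Z2 → ℕ) (hfin : (Function.support η).Finite)
    (L : List Z2) (hL : LegalSeq σc (η, fun _ => 0) L)
    (hcomp : ∀ z, (L.foldl (applyMove σc) (η, fun _ => 0)).1 z ≤ 1) :
    (¬ ∃ f : ℕ → Z2, ∀ n : ℕ,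
        LegalSeq σc (η, fun _ => 0) (List.ofFn fun i : Fin n => f i)) ∧
    (∀ L' : List Z2, LegalSeq σc (η, fun _ => 0) L' →
        (∀ z, (L'.foldl (applyMove σc) (η, fun _ => 0)).1 z ≤ 1) →
        (L'.foldl (applyMove σc) (η, fun _ => 0)).1
          = (L.foldl (applyMove σc) (η, fun _ => 0)).1) := by
  constructor
  · rintro ⟨f, hf⟩
    have hM := hf (L.length + 1)
    have hle := multiset_le σc _ (η, fun _ => 0) L hL hcomp hM
    have := Multiset.card_le_card hle
    simp at this
  · intro L' hL' hcomp'
    have h1 := multiset_le σc L' (η, fun _ => 0) L hL hcomp hL'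
    have h2 := multiset_le σc L (η, fun _ => 0) L' hL' hcomp' hL
    have heq := foldl_eq_of_perm σc L' (η, fun _ => 0) L hL' hL (le_antisymm h1 h2)
    rw [heq]
end

section
/- For every p∈[0,1), the kernel Q_p = p·Q_in + (1−p)·Q_out defines a uniformly layered walk; that is, Q_p satisfies conditions (U1), (U2) and (U3). -/
open MeasureTheory Filter
open scoped Classical ENNReal

section Helpers

lemma natAbs_add_sign {a : ℤ} (h : a ≠ 0) : (a + a.sign).natAbs = a.natAbs + 1 := by
  rcases h.lt_or_gt with h|h
  · rw [Int.sign_eq_neg_one_of_neg h]; omega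
  · rw [Int.sign_eq_one_of_pos h]; omega

lemma natAbs_sub_sign {a : ℤ} (h : a ≠ 0) : (a - a.sign).natAbs = a.natAbs - 1 := by
  rcases h.lt_or_gt with h|h
  · rw [Int.sign_eq_neg_one_of_neg h]; omega
  · rw [Int.sign_eq_one_of_pos h]; omega

lemma sign_add_sign {a : ℤ} (h : a ≠ 0) : (a + a.sign).sign = a.sign := by
  rcases h.lt_or_gt with h|h
  · rw [Int.sign_eq_neg_one_of_neg h, Int.sign_eq_neg_one_of_neg (by omega)]
  · rw [Int.sign_eq_one_of_pos h, Int.sign_eq_one_of_pos (by omega)]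

lemma add_sign_ne_zero {a : ℤ} (h : a ≠ 0) : a + a.sign ≠ 0 := by
  rcases h.lt_or_gt with h|h
  · rw [Int.sign_eq_neg_one_of_neg h]; omega
  · rw [Int.sign_eq_one_of_pos h]; omega

lemma sign_sub_sign {a : ℤ} (h : 2 ≤ a.natAbs) : (a - a.sign).sign = a.sign := by
  rcases (show a < 0 ∨ 0 < a by omega) with h'|h'
  · rw [Int.sign_eq_neg_one_of_neg h', Int.sign_eq_neg_one_of_neg (by omega)]
  · rw [Int.sign_eq_one_of_pos h', Int.sign_eq_one_of_pos (by omega)]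

lemma sub_sign_ne_zero {a : ℤ} (h : 2 ≤ a.natAbs) : a - a.sign ≠ 0 := by
  rcases (show a < 0 ∨ 0 < a by omega) with h'|h'
  · rw [Int.sign_eq_neg_one_of_neg h']; omega
  · rw [Int.sign_eq_one_of_pos h']; omega

lemma sub_sign_eq_zero {a : ℤ} (h : a.natAbs = 1) : a - a.sign = 0 := by
  rcases (show a = 1 ∨ a = -1 by omega) with rfl|rfl <;> decide

lemma sub_sign_zero_iff (a : ℤ) : a - a.sign = 0 ↔ (a = 0 ∨ a = 1 ∨ a = -1) := by
  rcases lt_trichotomy a 0 with h|rfl|h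
  · rw [Int.sign_eq_neg_one_of_neg h]; omega
  · decide
  · rw [Int.sign_eq_one_of_pos h]; omega

lemma sub_sign_inv {a c : ℤ} (ha : a ≠ 0) (h : a - a.sign = c) (hc : c ≠ 0) :
    c + c.sign = a := by
  have h2 : 2 ≤ a.natAbs := by
    rcases ha.lt_or_gt with h'|h'
    · rw [Int.sign_eq_neg_one_of_neg h'] at h; omega
    · rw [Int.sign_eq_one_of_pos h'] at h; omega
  rw [← h, sign_sub_sign h2]; ring

lemma add_sign_inv {a c : ℤ} (ha : a ≠ 0) (h : a + a.sign = c) : c - c.sign = a := by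
  subst h; rw [sign_add_sign ha]; ring

lemma dnorm_origin : dnorm origin = 0 := rfl

lemma dnorm_eq_zero {x : Z2} : dnorm x = 0 ↔ x = origin := by
  obtain ⟨a, b⟩ := x
  simp only [dnorm, origin, Prod.mk.injEq]
  omega

lemma dnorm_eq_one {x : Z2} :
    dnorm x = 1 ↔ x = (1,0) ∨ x = (-1,0) ∨ x = (0,1) ∨ x = (0,-1) := by
  obtain ⟨a, b⟩ := x
  simp only [dnorm, Prod.mk.injEq]
  omega

end Helpers
section Shape

lemma Qout_origin_eval (y : Z2) : Qout origin y = if dnorm y = 1 then 1/4 else 0 := by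
  unfold Qout; rw [if_pos rfl]

lemma Qin_origin_eval (y : Z2) : Qin origin y = if y = origin then 1 else 0 := by
  unfold Qin; rw [if_pos rfl]

lemma Qout_shape {x y : Z2} (h : Qout x y ≠ 0) :
    (x = origin ∧ dnorm y = 1) ∨
    (x.2 ≠ 0 ∧ y = (x.1, x.2 + x.2.sign)) ∨
    (x.1 ≠ 0 ∧ y = (x.1 + x.1.sign, x.2)) ∨
    (x.1 ≠ 0 ∧ x.2 = 0 ∧ (y = (x.1, 1) ∨ y = (x.1, -1))) ∨
    (x.1 = 0 ∧ x.2 ≠ 0 ∧ (y = (1, x.2) ∨ y = (-1, x.2))) := by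
  by_cases h1 : x = origin
  · rw [h1, Qout_origin_eval] at h
    refine Or.inl ⟨h1, ?_⟩
    by_contra hd; rw [if_neg hd] at h; exact h rfl
  · unfold Qout at h
    rw [if_neg h1] at h
    by_cases h2 : x.1 ≠ 0 ∧ x.2 ≠ 0
    · rw [if_pos h2] at h
      by_cases h3 : y = (x.1, x.2 + x.2.sign)
      · exact Or.inr (Or.inl ⟨h2.2, h3⟩)
      · rw [if_neg h3] at h
        by_cases h4 : y = (x.1 + x.1.sign, x.2)
        · exact Or.inr (Or.inr (Or.inl ⟨h2.1, h4⟩))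
        · rw [if_neg h4] at h; exact absurd rfl h
    · rw [if_neg h2] at h
      by_cases h3 : x.2 = 0
      · rw [if_pos h3] at h
        have hx1 : x.1 ≠ 0 := fun hx => h1 (Prod.ext hx h3)
        by_cases h4 : y = (x.1, 1) ∨ y = (x.1, -1)
        · exact Or.inr (Or.inr (Or.inr (Or.inl ⟨hx1, h3, h4⟩)))
        · rw [if_neg h4] at h
          by_cases h5 : y = (x.1 + x.1.sign, 0)
          · refine Or.inr (Or.inr (Or.inl ⟨hx1, ?_⟩))
            rw [h5, h3]
          · rw [if_neg h5] at h; exact absurd rfl h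
      · rw [if_neg h3] at h
        have hx1 : x.1 = 0 := by
          rcases not_and_or.mp h2 with h' | h'
          · exact not_not.mp h'
          · exact absurd (not_not.mp h') h3
        by_cases h4 : y = (1, x.2) ∨ y = (-1, x.2)
        · exact Or.inr (Or.inr (Or.inr (Or.inr ⟨hx1, h3, h4⟩)))
        · rw [if_neg h4] at h
          by_cases h5 : y = (0, x.2 + x.2.sign)
          · refine Or.inr (Or.inl ⟨h3, ?_⟩); rw [h5, hx1]
          · rw [if_neg h5] at h; exact absurd rfl h

lemma Qin_shape {x y : Z2} (h : Qin x y ≠ 0) :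
    (x = origin ∧ y = origin) ∨
    (x.1 ≠ 0 ∧ x.2 ≠ 0 ∧ (y = (x.1, x.2 - x.2.sign) ∨ y = (x.1 - x.1.sign, x.2))) ∨
    (x.1 ≠ 0 ∧ x.2 = 0 ∧ y = (x.1 - x.1.sign, 0)) ∨
    (x.1 = 0 ∧ x.2 ≠ 0 ∧ y = (0, x.2 - x.2.sign)) := by
  by_cases h1 : x = origin
  · rw [h1, Qin_origin_eval] at h
    refine Or.inl ⟨h1, ?_⟩
    by_contra hd; rw [if_neg hd] at h; exact h rfl
  · unfold Qin at h
    rw [if_neg h1] at h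
    by_cases h2 : x.1 ≠ 0 ∧ x.2 ≠ 0
    · rw [if_pos h2] at h
      by_cases h3 : y = (x.1, x.2 - x.2.sign)
      · exact Or.inr (Or.inl ⟨h2.1, h2.2, Or.inl h3⟩)
      · rw [if_neg h3] at h
        by_cases h4 : y = (x.1 - x.1.sign, x.2)
        · exact Or.inr (Or.inl ⟨h2.1, h2.2, Or.inr h4⟩)
        · rw [if_neg h4] at h; exact absurd rfl h
    · rw [if_neg h2] at h
      by_cases h3 : x.2 = 0
      · rw [if_pos h3] at h
        have hx1 : x.1 ≠ 0 := fun hx => h1 (Prod.ext hx h3)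
        by_cases h4 : y = (x.1 - x.1.sign, 0)
        · exact Or.inr (Or.inr (Or.inl ⟨hx1, h3, h4⟩))
        · rw [if_neg h4] at h; exact absurd rfl h
      · rw [if_neg h3] at h
        have hx1 : x.1 = 0 := by
          rcases not_and_or.mp h2 with h' | h'
          · exact not_not.mp h'
          · exact absurd (not_not.mp h') h3
        by_cases h4 : y = (0, x.2 - x.2.sign)
        · exact Or.inr (Or.inr (Or.inr ⟨hx1, h3, h4⟩))
        · rw [if_neg h4] at h; exact absurd rfl h

lemma Qout_dnorm {x y : Z2} (h : Qout x y ≠ 0) : dnorm y = dnorm x + 1 := by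
  rcases Qout_shape h with ⟨hx, hy⟩ | ⟨hx, hy⟩ | ⟨hx, hy⟩ | ⟨hx1, hx2, hy|hy⟩ | ⟨hx1, hx2, hy|hy⟩
  · rw [hx, dnorm_origin, hy]
  · rw [hy]; simp only [dnorm]; rw [natAbs_add_sign hx]; omega
  · rw [hy]; simp only [dnorm]; rw [natAbs_add_sign hx]; omega
  · rw [hy]; simp only [dnorm, hx2]; omega
  · rw [hy]; simp only [dnorm, hx2]; omega
  · rw [hy]; simp only [dnorm, hx1]; omega
  · rw [hy]; simp only [dnorm, hx1]; omega

lemma Qin_dnorm {x y : Z2} (h : Qin x y ≠ 0) :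
    dnorm x = dnorm y + 1 ∨ (x = origin ∧ y = origin) := by
  rcases Qin_shape h with hc | ⟨hx1, hx2, hy|hy⟩ | ⟨hx1, hx2, hy⟩ | ⟨hx1, hx2, hy⟩
  · exact Or.inr hc
  · left; rw [hy]; simp only [dnorm]
    have := natAbs_sub_sign hx2
    have := Int.natAbs_pos.mpr hx2
    omega
  · left; rw [hy]; simp only [dnorm]
    have := natAbs_sub_sign hx1
    have := Int.natAbs_pos.mpr hx1
    omega
  · left; rw [hy]; simp only [dnorm, hx2]
    have := natAbs_sub_sign hx1
    have := Int.natAbs_pos.mpr hx1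
    simp only [Int.natAbs_zero]
    omega
  · left; rw [hy]; simp only [dnorm, hx1]
    have := natAbs_sub_sign hx2
    have := Int.natAbs_pos.mpr hx2
    simp only [Int.natAbs_zero]
    omega

lemma Qout_nonneg (x y : Z2) : 0 ≤ Qout x y := by
  unfold Qout
  split_ifs <;> try positivity

lemma Qin_nonneg (x y : Z2) : 0 ≤ Qin x y := by
  unfold Qin
  split_ifs with h1 h2 h3 h4 h5 <;> try norm_num
  all_goals {
    have ha : 1 ≤ x.1.natAbs := Int.natAbs_pos.mpr (by tauto)
    have hb : 1 ≤ x.2.natAbs := Int.natAbs_pos.mpr (by tauto)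
    have ha' : (1:ℝ) ≤ (x.1.natAbs : ℝ) := by exact_mod_cast ha
    have hb' : (1:ℝ) ≤ (x.2.natAbs : ℝ) := by exact_mod_cast hb
    rw [Nat.cast_natAbs, Int.cast_abs] at ha' hb'
    apply div_nonneg <;> linarith }

end Shape
section Eval

lemma pair_ne_origin {a b : ℤ} (h : a ≠ 0) : ((a, b) : Z2) ≠ origin := by
  simp only [origin, ne_eq, Prod.mk.injEq, not_and]
  intro h'; exact absurd h' h

lemma pair_ne_origin' {a b : ℤ} (h : b ≠ 0) : ((a, b) : Z2) ≠ origin := by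
  simp only [origin, ne_eq, Prod.mk.injEq, not_and]
  intro _; exact h

lemma isign_ne_zero {a : ℤ} (h : a ≠ 0) : a.sign ≠ 0 :=
  fun hs => h (Int.sign_eq_zero_iff_zero.mp hs)

lemma Qout_int_up {a b : ℤ} (ha : a ≠ 0) (hb : b ≠ 0) :
    Qout (a, b) (a, b + b.sign) =
      ((b.natAbs : ℝ) + 1/2) / ((a.natAbs : ℝ) + (b.natAbs : ℝ) + 1) := by
  unfold Qout
  rw [if_neg (pair_ne_origin ha), if_pos ⟨ha, hb⟩, if_pos rfl]

lemma Qout_int_right {a b : ℤ} (ha : a ≠ 0) (hb : b ≠ 0) :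
    Qout (a, b) (a + a.sign, b) =
      ((a.natAbs : ℝ) + 1/2) / ((a.natAbs : ℝ) + (b.natAbs : ℝ) + 1) := by
  unfold Qout
  rw [if_neg (pair_ne_origin ha), if_pos ⟨ha, hb⟩, if_neg, if_pos rfl]
  simp only [Prod.mk.injEq, not_and]
  intro h
  exact absurd (by linarith : a.sign = 0) (isign_ne_zero ha)

lemma Qout_axis_vert {a e : ℤ} (ha : a ≠ 0) (he : e = 1 ∨ e = -1) :
    Qout (a, 0) (a, e) = (1/2) / ((a.natAbs : ℝ) + 1) := by
  unfold Qout
  rw [if_neg (pair_ne_origin ha), if_neg (by simp), if_pos rfl, if_pos]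
  rcases he with rfl | rfl
  · exact Or.inl rfl
  · exact Or.inr rfl

lemma Qout_axis_out {a : ℤ} (ha : a ≠ 0) :
    Qout (a, 0) (a + a.sign, 0) = (a.natAbs : ℝ) / ((a.natAbs : ℝ) + 1) := by
  unfold Qout
  rw [if_neg (pair_ne_origin ha), if_neg (by simp), if_pos rfl, if_neg (by simp),
    if_pos rfl]

lemma Qout_yaxis_horiz {b e : ℤ} (hb : b ≠ 0) (he : e = 1 ∨ e = -1) :
    Qout (0, b) (e, b) = (1/2) / ((b.natAbs : ℝ) + 1) := by
  unfold Qout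
  rw [if_neg (pair_ne_origin' hb), if_neg (by simp), if_neg hb, if_pos]
  rcases he with rfl | rfl
  · exact Or.inl rfl
  · exact Or.inr rfl

lemma Qout_yaxis_out {b : ℤ} (hb : b ≠ 0) :
    Qout (0, b) (0, b + b.sign) = (b.natAbs : ℝ) / ((b.natAbs : ℝ) + 1) := by
  unfold Qout
  rw [if_neg (pair_ne_origin' hb), if_neg (by simp), if_neg hb, if_neg (by simp),
    if_pos rfl]

lemma Qin_int_down {a b : ℤ} (ha : a ≠ 0) (hb : b ≠ 0) :
    Qin (a, b) (a, b - b.sign) =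
      ((b.natAbs : ℝ) - 1/2) / ((a.natAbs : ℝ) + (b.natAbs : ℝ) - 1) := by
  unfold Qin
  rw [if_neg (pair_ne_origin ha), if_pos ⟨ha, hb⟩, if_pos rfl]

lemma Qin_int_left {a b : ℤ} (ha : a ≠ 0) (hb : b ≠ 0) :
    Qin (a, b) (a - a.sign, b) =
      ((a.natAbs : ℝ) - 1/2) / ((a.natAbs : ℝ) + (b.natAbs : ℝ) - 1) := by
  unfold Qin
  rw [if_neg (pair_ne_origin ha), if_pos ⟨ha, hb⟩, if_neg, if_pos rfl]
  simp only [Prod.mk.injEq, not_and]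
  intro h
  exact absurd (by linarith : a.sign = 0) (isign_ne_zero ha)

lemma Qin_axis_eval {a : ℤ} (ha : a ≠ 0) (y : Z2) :
    Qin (a, 0) y = if y = (a - a.sign, 0) then 1 else 0 := by
  unfold Qin
  rw [if_neg (pair_ne_origin ha), if_neg (by simp), if_pos rfl]

lemma Qin_yaxis_eval {b : ℤ} (hb : b ≠ 0) (y : Z2) :
    Qin (0, b) y = if y = (0, b - b.sign) then 1 else 0 := by
  unfold Qin
  rw [if_neg (pair_ne_origin' hb), if_neg (by simp), if_neg hb]

end Eval
section Sums

lemma mem_diamondF {x : Z2} {n : ℕ} (h : dnorm x ≤ n) : x ∈ diamondF n := by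
  unfold diamondF
  rw [Finset.mem_filter, Finset.mem_Icc]
  unfold dnorm at h
  refine ⟨⟨?_, ?_⟩, h⟩
  · rw [Prod.mk_le_mk]; constructor <;> omega
  · rw [Prod.mk_le_mk]; constructor <;> omega

lemma summable_dnorm_bound (g : Z2 → ℝ) (n : ℕ) (h : ∀ x, g x ≠ 0 → dnorm x ≤ n) :
    Summable g :=
  summable_of_ne_finset_zero (s := diamondF n)
    (fun x hx => by by_contra h'; exact hx (mem_diamondF (h x h')))

lemma summable_Qin_col (y : Z2) : Summable fun x => Qin x y :=
  summable_dnorm_bound _ (dnorm y + 1) fun x hx => by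
    rcases Qin_dnorm hx with h | ⟨h, _⟩
    · omega
    · rw [h, dnorm_origin]; omega

lemma summable_Qout_col (y : Z2) : Summable fun x => Qout x y :=
  summable_dnorm_bound _ (dnorm y) fun x hx => by
    have := Qout_dnorm hx; omega

lemma summable_Qin_row (x : Z2) : Summable fun y => Qin x y :=
  summable_dnorm_bound _ (dnorm x) fun y hy => by
    rcases Qin_dnorm hy with h | ⟨_, h⟩
    · omega
    · rw [h, dnorm_origin]; omega

lemma summable_Qout_row (x : Z2) : Summable fun y => Qout x y :=
  summable_dnorm_bound _ (dnorm x + 1) fun y hy => by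
    have := Qout_dnorm hy; omega

lemma tsum_layer_eq_sum_s16 {k : ℕ} (g : Z2 → ℝ) (S : Finset Z2)
    (hS : ∀ x, dnorm x = k → g x ≠ 0 → x ∈ S) (hSk : ∀ x ∈ S, dnorm x = k) :
    ∑' x : layer k, g ↑x = ∑ x ∈ S, g x := by
  rw [tsum_subtype]
  rw [tsum_eq_sum (s := S) ?_]
  · exact Finset.sum_congr rfl fun x hx => Set.indicator_of_mem (show x ∈ layer k from hSk x hx) g
  · intro x hx
    by_cases hk : x ∈ layer k
    · rw [Set.indicator_of_mem hk]
      by_contra h'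
      exact hx (hS x hk h')
    · exact Set.indicator_of_notMem hk g

lemma Qout_rowsum (x : Z2) : ∑' y, Qout x y = 1 := by
  obtain ⟨a, b⟩ := x
  rcases eq_or_ne a 0 with rfl | ha <;> rcases eq_or_ne b 0 with rfl | hb
  · -- origin
    rw [show (((0:ℤ), (0:ℤ)) : Z2) = origin from rfl]
    rw [tsum_eq_sum (s := ({((1:ℤ),(0:ℤ)), (-1,0), (0,1), (0,-1)} : Finset Z2)) ?_]
    · norm_num [Qout_origin_eval, dnorm, Finset.sum_insert, Finset.mem_insert]
    · intro y hy
      by_contra h'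
      have h1 := Qout_dnorm h'
      rw [dnorm_origin] at h1
      rcases dnorm_eq_one.mp h1 with rfl|rfl|rfl|rfl <;> simp at hy
  · -- y-axis (0, b)
    rw [tsum_eq_sum (s := ({((1:ℤ), b), ((-1:ℤ), b), ((0:ℤ), b + b.sign)} : Finset Z2)) ?_]
    · have e1 : Qout (0, b) (1, b) = (1/2)/((b.natAbs:ℝ)+1) :=
        Qout_yaxis_horiz hb (Or.inl rfl)
      have e2 : Qout (0, b) (-1, b) = (1/2)/((b.natAbs:ℝ)+1) :=
        Qout_yaxis_horiz hb (Or.inr rfl)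
      have e3 := Qout_yaxis_out hb
      rw [Finset.sum_insert (by simp), Finset.sum_insert (by simp),
        Finset.sum_singleton, e1, e2, e3]
      have hB : (0:ℝ) < (b.natAbs:ℝ) + 1 := by positivity
      field_simp
      ring
    · intro y hy
      by_contra h'
      rcases Qout_shape h' with ⟨h1, _⟩ | ⟨h1, h2⟩ | ⟨h1, h2⟩ | ⟨h1, h2, _⟩ | ⟨h1, h2, h3|h3⟩
      · exact (pair_ne_origin' hb) h1
      · exact hy (by rw [h2]; simp)
      · exact h1 rfl
      · exact hb h2
      · exact hy (by rw [h3]; simp)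
      · exact hy (by rw [h3]; simp)
  · -- x-axis (a, 0)
    rw [tsum_eq_sum (s := ({(a, (1:ℤ)), (a, (-1:ℤ)), (a + a.sign, (0:ℤ))} : Finset Z2)) ?_]
    · have e1 : Qout (a, 0) (a, 1) = (1/2)/((a.natAbs:ℝ)+1) :=
        Qout_axis_vert ha (Or.inl rfl)
      have e2 : Qout (a, 0) (a, -1) = (1/2)/((a.natAbs:ℝ)+1) :=
        Qout_axis_vert ha (Or.inr rfl)
      have e3 := Qout_axis_out ha
      have hne1 : ((a, (1:ℤ)) : Z2) ≠ (a, -1) := by simp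
      have hne2 : ((a, (1:ℤ)) : Z2) ≠ (a + a.sign, 0) := by simp
      have hne3 : ((a, (-1:ℤ)) : Z2) ≠ (a + a.sign, 0) := by simp
      rw [Finset.sum_insert (by simp [hne1, hne2]), Finset.sum_insert (by simp [hne3]),
        Finset.sum_singleton, e1, e2, e3]
      have hB : (0:ℝ) < (a.natAbs:ℝ) + 1 := by positivity
      field_simp
      ring
    · intro y hy
      by_contra h'
      rcases Qout_shape h' with ⟨h1, _⟩ | ⟨h1, h2⟩ | ⟨h1, h2⟩ | ⟨h1, h2, h3|h3⟩ | ⟨h1, h2, _⟩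
      · exact (pair_ne_origin ha) h1
      · exact h1 rfl
      · exact hy (by rw [h2]; simp)
      · exact hy (by rw [h3]; simp)
      · exact hy (by rw [h3]; simp)
      · exact ha h1
  · -- interior (a, b)
    rw [tsum_eq_sum (s := ({(a, b + b.sign), (a + a.sign, b)} : Finset Z2)) ?_]
    · have e1 := Qout_int_up ha hb
      have e2 := Qout_int_right ha hb
      have hne : ((a, b + b.sign) : Z2) ≠ (a + a.sign, b) := by
        simp only [ne_eq, Prod.mk.injEq, not_and]
        intro h
        exact absurd (by linarith : a.sign = 0) (isign_ne_zero ha)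
      rw [Finset.sum_insert (by simp [hne]), Finset.sum_singleton, e1, e2]
      have hB : (0:ℝ) < (a.natAbs:ℝ) + (b.natAbs:ℝ) + 1 := by positivity
      field_simp
      ring
    · intro y hy
      by_contra h'
      rcases Qout_shape h' with ⟨h1, _⟩ | ⟨h1, h2⟩ | ⟨h1, h2⟩ | ⟨h1, h2, _⟩ | ⟨h1, h2, _⟩
      · exact (pair_ne_origin ha) h1
      · exact hy (by rw [h2]; simp)
      · exact hy (by rw [h2]; simp)
      · exact hb h2
      · exact ha h1

lemma Qin_rowsum (x : Z2) : ∑' y, Qin x y = 1 := by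
  obtain ⟨a, b⟩ := x
  rcases eq_or_ne a 0 with rfl | ha <;> rcases eq_or_ne b 0 with rfl | hb
  · rw [show (((0:ℤ), (0:ℤ)) : Z2) = origin from rfl]
    simp only [Qin_origin_eval]
    exact tsum_ite_eq origin 1
  · simp only [Qin_yaxis_eval hb]
    exact tsum_ite_eq _ 1
  · simp only [Qin_axis_eval ha]
    exact tsum_ite_eq _ 1
  · rw [tsum_eq_sum (s := ({(a, b - b.sign), (a - a.sign, b)} : Finset Z2)) ?_]
    · have e1 := Qin_int_down ha hb
      have e2 := Qin_int_left ha hb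
      have hne : ((a, b - b.sign) : Z2) ≠ (a - a.sign, b) := by
        simp only [ne_eq, Prod.mk.injEq, not_and]
        intro h
        exact absurd (by linarith : a.sign = 0) (isign_ne_zero ha)
      rw [Finset.sum_insert (by simp [hne]), Finset.sum_singleton, e1, e2]
      have hA : (1:ℝ) ≤ (a.natAbs:ℝ) := by
        exact_mod_cast Int.natAbs_pos.mpr ha
      have hB : (1:ℝ) ≤ (b.natAbs:ℝ) := by
        exact_mod_cast Int.natAbs_pos.mpr hb
      have hD : (a.natAbs:ℝ) + (b.natAbs:ℝ) - 1 ≠ 0 := by linarith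
      field_simp
      ring
    · intro y hy
      by_contra h'
      rcases Qin_shape h' with ⟨h1, _⟩ | ⟨h1, h2, h3|h3⟩ | ⟨h1, h2, _⟩ | ⟨h1, h2, _⟩
      · exact (pair_ne_origin ha) h1
      · exact hy (by rw [h3]; simp)
      · exact hy (by rw [h3]; simp)
      · exact hb h2
      · exact ha h1

end Sums
section ColOut

lemma colQout (k : ℕ) (y : Z2) :
    ∑' x : layer k, Qout x.1 y =
      if dnorm y = k + 1 then (layerCard k : ℝ) / (layerCard (k+1) : ℝ) else 0 := by
  by_cases hk : dnorm y = k + 1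
  swap
  · rw [if_neg hk, tsum_layer_eq_sum_s16 (fun x => Qout x y) ∅ ?_ (by simp), Finset.sum_empty]
    intro x hx h'
    exact absurd (by rw [Qout_dnorm h', hx]) hk
  rw [if_pos hk]
  obtain ⟨c, d⟩ := y
  rcases eq_or_ne c 0 with rfl | hc <;> rcases eq_or_ne d 0 with rfl | hd
  · simp only [dnorm, Int.natAbs_zero] at hk; omega
  · -- y = (0, d), d ≠ 0, |d| = k+1
    have hdk : d.natAbs = k + 1 := by simpa [dnorm] using hk
    rcases Nat.eq_zero_or_pos k with rfl | hk1
    · rw [tsum_layer_eq_sum_s16 (fun x => Qout x (0, d)) {origin} ?_ ?_]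
      · rw [Finset.sum_singleton, Qout_origin_eval, if_pos hk]
        norm_num [layerCard]
      · intro x hx _; rw [Finset.mem_singleton]; exact dnorm_eq_zero.mp hx
      · intro x hx; rw [Finset.mem_singleton] at hx; subst hx; rfl
    · have hd2 : 2 ≤ d.natAbs := by omega
      rw [tsum_layer_eq_sum_s16 (fun x => Qout x (0, d)) {((0:ℤ), d - d.sign)} ?_ ?_]
      · rw [Finset.sum_singleton]
        have hv := Qout_yaxis_out (sub_sign_ne_zero hd2)
        rw [sign_sub_sign hd2, show d - d.sign + d.sign = d from by ring] at hv
        rw [hv, natAbs_sub_sign hd, hdk]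
        simp only [layerCard]
        rw [if_neg (by omega), if_neg (by omega)]
        push_cast [Nat.add_sub_cancel]
        rw [div_eq_div_iff (by positivity) (by positivity)]
        ring
      · intro x hx h'
        rw [Finset.mem_singleton]
        rcases Qout_shape h' with ⟨h1, _⟩ | ⟨h1, h2⟩ | ⟨h1, h2⟩ | ⟨h1, h2, h3|h3⟩ | ⟨h1, h2, h3|h3⟩
        · rw [h1, dnorm_origin] at hx; omega
        · rw [Prod.ext_iff] at h2
          obtain ⟨h21, h22⟩ := h2
          exact Prod.ext h21.symm (add_sign_inv h1 h22.symm).symm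
        · rw [Prod.ext_iff] at h2
          exact absurd h2.1.symm (add_sign_ne_zero h1)
        · rw [Prod.ext_iff] at h3; exfalso; omega
        · rw [Prod.ext_iff] at h3; exfalso; omega
        · rw [Prod.ext_iff] at h3; exfalso; omega
        · rw [Prod.ext_iff] at h3; exfalso; omega
      · intro x hx
        rw [Finset.mem_singleton] at hx
        subst hx
        simp only [dnorm, Int.natAbs_zero, natAbs_sub_sign hd]
        omega
  · -- y = (c, 0), c ≠ 0, |c| = k+1
    have hck : c.natAbs = k + 1 := by simpa [dnorm] using hk
    rcases Nat.eq_zero_or_pos k with rfl | hk1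
    · rw [tsum_layer_eq_sum_s16 (fun x => Qout x (c, 0)) {origin} ?_ ?_]
      · rw [Finset.sum_singleton, Qout_origin_eval, if_pos hk]
        norm_num [layerCard]
      · intro x hx _; rw [Finset.mem_singleton]; exact dnorm_eq_zero.mp hx
      · intro x hx; rw [Finset.mem_singleton] at hx; subst hx; rfl
    · have hc2 : 2 ≤ c.natAbs := by omega
      rw [tsum_layer_eq_sum_s16 (fun x => Qout x (c, 0)) {(c - c.sign, (0:ℤ))} ?_ ?_]
      · rw [Finset.sum_singleton]
        have hv := Qout_axis_out (sub_sign_ne_zero hc2)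
        rw [sign_sub_sign hc2, show c - c.sign + c.sign = c from by ring] at hv
        rw [hv, natAbs_sub_sign hc, hck]
        simp only [layerCard]
        rw [if_neg (by omega), if_neg (by omega)]
        push_cast [Nat.add_sub_cancel]
        rw [div_eq_div_iff (by positivity) (by positivity)]
        ring
      · intro x hx h'
        rw [Finset.mem_singleton]
        rcases Qout_shape h' with ⟨h1, _⟩ | ⟨h1, h2⟩ | ⟨h1, h2⟩ | ⟨h1, h2, h3|h3⟩ | ⟨h1, h2, h3|h3⟩
        · rw [h1, dnorm_origin] at hx; omega
        · rw [Prod.ext_iff] at h2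
          exact absurd h2.2.symm (add_sign_ne_zero h1)
        · rw [Prod.ext_iff] at h2
          obtain ⟨h21, h22⟩ := h2
          exact Prod.ext (add_sign_inv h1 h21.symm).symm h22.symm
        · rw [Prod.ext_iff] at h3; exfalso; omega
        · rw [Prod.ext_iff] at h3; exfalso; omega
        · rw [Prod.ext_iff] at h3
          exfalso; exact h2 h3.2.symm
        · rw [Prod.ext_iff] at h3
          exfalso; exact h2 h3.2.symm
      · intro x hx
        rw [Finset.mem_singleton] at hx
        subst hx
        simp only [dnorm, Int.natAbs_zero, natAbs_sub_sign hc]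
        omega
  · -- interior y = (c, d)
    have hcd : c.natAbs + d.natAbs = k + 1 := by simpa [dnorm] using hk
    have hcp := Int.natAbs_pos.mpr hc
    have hdp := Int.natAbs_pos.mpr hd
    have hk1 : 1 ≤ k := by omega
    rw [tsum_layer_eq_sum_s16 (fun x => Qout x (c, d)) {(c - c.sign, d), (c, d - d.sign)} ?_ ?_]
    · have hne : ((c - c.sign, d) : Z2) ≠ (c, d - d.sign) := by
        simp only [ne_eq, Prod.mk.injEq, not_and]
        intro h
        exact absurd (by linarith : c.sign = 0) (isign_ne_zero hc)
      rw [Finset.sum_insert (by simp [hne]), Finset.sum_singleton]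
      have hv1 : Qout (c - c.sign, d) (c, d) =
          ((c.natAbs:ℝ) - 1/2)/((c.natAbs:ℝ) + (d.natAbs:ℝ)) := by
        rcases (show c.natAbs = 1 ∨ 2 ≤ c.natAbs by omega) with h1 | h1
        · rw [sub_sign_eq_zero h1, Qout_yaxis_horiz hd (show c = 1 ∨ c = -1 by omega), h1]
          push_cast
          rw [div_eq_div_iff (by positivity) (by positivity)]
          ring
        · have hcs := sub_sign_ne_zero h1
          have hv := Qout_int_right (b := d) hcs hd
          rw [sign_sub_sign h1, show c - c.sign + c.sign = c from by ring] at hv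
          rw [hv, natAbs_sub_sign hc]
          rw [Nat.cast_sub (by omega)]
          push_cast
          have hA1 : (1:ℝ) ≤ (c.natAbs:ℝ) := by exact_mod_cast hcp
          have hB1 : (1:ℝ) ≤ (d.natAbs:ℝ) := by exact_mod_cast hdp
          rw [div_eq_div_iff (by intro h; linarith) (by intro h; linarith)]
          ring
      have hv2 : Qout (c, d - d.sign) (c, d) =
          ((d.natAbs:ℝ) - 1/2)/((c.natAbs:ℝ) + (d.natAbs:ℝ)) := by
        rcases (show d.natAbs = 1 ∨ 2 ≤ d.natAbs by omega) with h1 | h1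
        · rw [sub_sign_eq_zero h1, Qout_axis_vert hc (show d = 1 ∨ d = -1 by omega), h1]
          push_cast
          rw [div_eq_div_iff (by positivity) (by positivity)]
          ring
        · have hds := sub_sign_ne_zero h1
          have hv := Qout_int_up (a := c) hc hds
          rw [sign_sub_sign h1, show d - d.sign + d.sign = d from by ring] at hv
          rw [hv, natAbs_sub_sign hd]
          rw [Nat.cast_sub (by omega)]
          push_cast
          have hA1 : (1:ℝ) ≤ (c.natAbs:ℝ) := by exact_mod_cast hcp
          have hB1 : (1:ℝ) ≤ (d.natAbs:ℝ) := by exact_mod_cast hdp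
          rw [div_eq_div_iff (by intro h; linarith) (by intro h; linarith)]
          ring
      rw [hv1, hv2, ← add_div]
      have hAB : (c.natAbs:ℝ) + (d.natAbs:ℝ) = (k:ℝ) + 1 := by exact_mod_cast hcd
      rw [show ((c.natAbs:ℝ) - 1/2) + ((d.natAbs:ℝ) - 1/2) = (k:ℝ) from by linarith, hAB]
      simp only [layerCard]
      rw [if_neg (by omega), if_neg (by omega)]
      push_cast
      rw [div_eq_div_iff (by positivity) (by positivity)]
      ring
    · intro x hx h'
      simp only [Finset.mem_insert, Finset.mem_singleton]
      rcases Qout_shape h' with ⟨h1, _⟩ | ⟨h1, h2⟩ | ⟨h1, h2⟩ | ⟨h1, h2, h3|h3⟩ | ⟨h1, h2, h3|h3⟩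
      · rw [h1, dnorm_origin] at hx; omega
      · rw [Prod.ext_iff] at h2
        obtain ⟨h21, h22⟩ := h2
        exact Or.inr (Prod.ext h21.symm (add_sign_inv h1 h22.symm).symm)
      · rw [Prod.ext_iff] at h2
        obtain ⟨h21, h22⟩ := h2
        exact Or.inl (Prod.ext (add_sign_inv h1 h21.symm).symm h22.symm)
      · rw [Prod.ext_iff] at h3
        obtain ⟨h31, h32⟩ := h3
        refine Or.inr (Prod.ext h31.symm ?_)
        rw [h2, sub_sign_eq_zero (show d.natAbs = 1 by omega)]
      · rw [Prod.ext_iff] at h3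
        obtain ⟨h31, h32⟩ := h3
        refine Or.inr (Prod.ext h31.symm ?_)
        rw [h2, sub_sign_eq_zero (show d.natAbs = 1 by omega)]
      · rw [Prod.ext_iff] at h3
        obtain ⟨h31, h32⟩ := h3
        refine Or.inl (Prod.ext ?_ h32.symm)
        rw [h1, sub_sign_eq_zero (show c.natAbs = 1 by omega)]
      · rw [Prod.ext_iff] at h3
        obtain ⟨h31, h32⟩ := h3
        refine Or.inl (Prod.ext ?_ h32.symm)
        rw [h1, sub_sign_eq_zero (show c.natAbs = 1 by omega)]
    · intro x hx
      simp only [Finset.mem_insert, Finset.mem_singleton] at hx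
      rcases hx with rfl | rfl
      · simp only [dnorm, natAbs_sub_sign hc]; omega
      · simp only [dnorm, natAbs_sub_sign hd]; omega

end ColOut
section ColIn

lemma colQin (k : ℕ) (y : Z2) :
    ∑' x : layer k, Qin x.1 y =
      if dnorm y = 0 ∧ k = 0 then 1
      else if dnorm y + 1 = k then (layerCard k : ℝ) / (layerCard (dnorm y) : ℝ)
      else 0 := by
  by_cases h0 : dnorm y = 0 ∧ k = 0
  · obtain ⟨hy0, rfl⟩ := h0
    have hy := dnorm_eq_zero.mp hy0
    subst hy
    rw [if_pos ⟨hy0, rfl⟩]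
    rw [tsum_layer_eq_sum_s16 (fun x => Qin x origin) {origin} ?_ ?_]
    · rw [Finset.sum_singleton, Qin_origin_eval, if_pos rfl]
    · intro x hx _; rw [Finset.mem_singleton]; exact dnorm_eq_zero.mp hx
    · intro x hx; rw [Finset.mem_singleton] at hx; subst hx; rfl
  rw [if_neg h0]
  by_cases h1 : dnorm y + 1 = k
  swap
  · rw [if_neg h1, tsum_layer_eq_sum_s16 (fun x => Qin x y) ∅ ?_ (by simp), Finset.sum_empty]
    intro x hx h'
    exfalso
    rcases Qin_dnorm h' with h | ⟨hxo, hyo⟩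
    · exact h1 (by omega)
    · rw [hxo, dnorm_origin] at hx
      rw [hyo, dnorm_origin] at h0
      exact h0 ⟨rfl, hx.symm⟩
  rw [if_pos h1]
  obtain ⟨c, d⟩ := y
  have s1 : ((1:ℤ)).sign = 1 := by decide
  have s2 : ((-1:ℤ)).sign = -1 := by decide
  rcases eq_or_ne c 0 with rfl | hc <;> rcases eq_or_ne d 0 with rfl | hd
  · -- y = origin, k = 1
    have hk1 : k = 1 := by simpa [dnorm] using h1.symm
    subst hk1
    rw [tsum_layer_eq_sum_s16 (fun x => Qin x (0, 0))
      ({((1:ℤ),(0:ℤ)), ((-1:ℤ),(0:ℤ)), ((0:ℤ),(1:ℤ)), ((0:ℤ),(-1:ℤ))} : Finset Z2) ?_ ?_]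
    · have e1 : Qin ((1:ℤ),(0:ℤ)) ((0:ℤ),(0:ℤ)) = 1 := by
        rw [Qin_axis_eval (by norm_num : (1:ℤ) ≠ 0), if_pos (by rw [s1]; norm_num)]
      have e2 : Qin ((-1:ℤ),(0:ℤ)) ((0:ℤ),(0:ℤ)) = 1 := by
        rw [Qin_axis_eval (by norm_num : (-1:ℤ) ≠ 0), if_pos (by rw [s2]; norm_num)]
      have e3 : Qin ((0:ℤ),(1:ℤ)) ((0:ℤ),(0:ℤ)) = 1 := by
        rw [Qin_yaxis_eval (by norm_num : (1:ℤ) ≠ 0), if_pos (by rw [s1]; norm_num)]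
      have e4 : Qin ((0:ℤ),(-1:ℤ)) ((0:ℤ),(0:ℤ)) = 1 := by
        rw [Qin_yaxis_eval (by norm_num : (-1:ℤ) ≠ 0), if_pos (by rw [s2]; norm_num)]
      rw [Finset.sum_insert (by decide), Finset.sum_insert (by decide),
        Finset.sum_insert (by decide), Finset.sum_singleton, e1, e2, e3, e4]
      norm_num [layerCard, dnorm]
    · intro x hx h'
      simp only [Finset.mem_insert, Finset.mem_singleton]
      rcases Qin_shape h' with ⟨hxo, _⟩ | ⟨hx1, hx2, hy|hy⟩ | ⟨hx1, hx2, hy⟩ | ⟨hx1, hx2, hy⟩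
      · rw [hxo, dnorm_origin] at hx; omega
      · rw [Prod.ext_iff] at hy; exact absurd hy.1.symm hx1
      · rw [Prod.ext_iff] at hy; exact absurd hy.2.symm hx2
      · rw [Prod.ext_iff] at hy
        obtain ⟨hy1, _⟩ := hy
        have := (sub_sign_zero_iff x.1).mp hy1.symm
        have hx1' : x.1 = 1 ∨ x.1 = -1 := by tauto
        rcases hx1' with h'' | h''
        · exact Or.inl (Prod.ext h'' hx2)
        · exact Or.inr (Or.inl (Prod.ext h'' hx2))
      · rw [Prod.ext_iff] at hy
        obtain ⟨_, hy2⟩ := hy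
        have := (sub_sign_zero_iff x.2).mp hy2.symm
        have hx2' : x.2 = 1 ∨ x.2 = -1 := by tauto
        rcases hx2' with h'' | h''
        · exact Or.inr (Or.inr (Or.inl (Prod.ext hx1 h'')))
        · exact Or.inr (Or.inr (Or.inr (Prod.ext hx1 h'')))
    · intro x hx
      fin_cases hx <;> decide
  · -- y = (0, d), d ≠ 0
    have hB : 1 ≤ d.natAbs := Int.natAbs_pos.mpr hd
    have hdk : d.natAbs + 1 = k := by simpa [dnorm] using h1
    rw [tsum_layer_eq_sum_s16 (fun x => Qin x (0, d))
      ({((0:ℤ), d + d.sign), ((1:ℤ), d), ((-1:ℤ), d)} : Finset Z2) ?_ ?_]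
    · have e1 : Qin ((0:ℤ), d + d.sign) ((0:ℤ), d) = 1 := by
        rw [Qin_yaxis_eval (add_sign_ne_zero hd),
          if_pos (by rw [sign_add_sign hd]; norm_num)]
      have e2 : Qin ((1:ℤ), d) ((0:ℤ), d) = (1/2) / (d.natAbs : ℝ) := by
        have hv := Qin_int_left (a := 1) (b := d) one_ne_zero hd
        rw [s1] at hv
        norm_num at hv
        rw [hv, Nat.cast_natAbs, Int.cast_abs]
      have e3 : Qin ((-1:ℤ), d) ((0:ℤ), d) = (1/2) / (d.natAbs : ℝ) := by
        have hv := Qin_int_left (a := -1) (b := d) (by norm_num) hd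
        rw [s2] at hv
        norm_num at hv
        rw [hv, Nat.cast_natAbs, Int.cast_abs]
      have hd1 : ((0:ℤ), d + d.sign) ≠ ((1:ℤ), d) := by
        simp only [ne_eq, Prod.mk.injEq, not_and]; intro h; omega
      have hd2 : ((0:ℤ), d + d.sign) ≠ ((-1:ℤ), d) := by
        simp only [ne_eq, Prod.mk.injEq, not_and]; intro h; omega
      have hd3 : ((1:ℤ), d) ≠ ((-1:ℤ), d) := by
        simp only [ne_eq, Prod.mk.injEq, not_and]; intro h; omega
      rw [Finset.sum_insert (by simp [hd1, hd2]), Finset.sum_insert (by simp [hd3]),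
        Finset.sum_singleton, e1, e2, e3]
      simp only [dnorm, Int.natAbs_zero, zero_add, layerCard]
      rw [if_neg (by omega), if_neg (by omega)]
      have hB' : (1:ℝ) ≤ (d.natAbs : ℝ) := by exact_mod_cast hB
      rw [← hdk]
      push_cast
      have hBne : (d.natAbs:ℝ) ≠ 0 := by linarith
      field_simp
      ring
    · intro x hx h'
      simp only [Finset.mem_insert, Finset.mem_singleton]
      rcases Qin_shape h' with ⟨hxo, hyo⟩ | ⟨hx1, hx2, hy|hy⟩ | ⟨hx1, hx2, hy⟩ | ⟨hx1, hx2, hy⟩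
      · rw [Prod.ext_iff] at hyo; exact absurd hyo.2 hd
      · rw [Prod.ext_iff] at hy; exact absurd hy.1.symm hx1
      · rw [Prod.ext_iff] at hy
        obtain ⟨hy1, hy2⟩ := hy
        have := (sub_sign_zero_iff x.1).mp hy1.symm
        have hx1' : x.1 = 1 ∨ x.1 = -1 := by tauto
        rcases hx1' with h'' | h''
        · exact Or.inr (Or.inl (Prod.ext h'' hy2.symm))
        · exact Or.inr (Or.inr (Prod.ext h'' hy2.symm))
      · rw [Prod.ext_iff] at hy; exact absurd hy.2 hd
      · rw [Prod.ext_iff] at hy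
        obtain ⟨hy1, hy2⟩ := hy
        exact Or.inl (Prod.ext hx1 (sub_sign_inv hx2 hy2.symm hd).symm)
    · intro x hx
      simp only [Finset.mem_insert, Finset.mem_singleton] at hx
      have hn := natAbs_add_sign hd
      rcases hx with rfl | rfl | rfl <;> simp only [dnorm] <;> omega
  · -- y = (c, 0), c ≠ 0
    have hA : 1 ≤ c.natAbs := Int.natAbs_pos.mpr hc
    have hck : c.natAbs + 1 = k := by simpa [dnorm] using h1
    rw [tsum_layer_eq_sum_s16 (fun x => Qin x (c, 0))
      ({(c + c.sign, (0:ℤ)), (c, (1:ℤ)), (c, (-1:ℤ))} : Finset Z2) ?_ ?_]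
    · have e1 : Qin (c + c.sign, (0:ℤ)) (c, (0:ℤ)) = 1 := by
        rw [Qin_axis_eval (add_sign_ne_zero hc),
          if_pos (by rw [sign_add_sign hc]; norm_num)]
      have e2 : Qin (c, (1:ℤ)) (c, (0:ℤ)) = (1/2) / (c.natAbs : ℝ) := by
        have hv := Qin_int_down (a := c) (b := 1) hc one_ne_zero
        rw [s1] at hv
        norm_num at hv
        rw [hv, Nat.cast_natAbs, Int.cast_abs]
      have e3 : Qin (c, (-1:ℤ)) (c, (0:ℤ)) = (1/2) / (c.natAbs : ℝ) := by
        have hv := Qin_int_down (a := c) (b := -1) hc (by norm_num)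
        rw [s2] at hv
        norm_num at hv
        rw [hv, Nat.cast_natAbs, Int.cast_abs]
      have hd1 : (c + c.sign, (0:ℤ)) ≠ (c, (1:ℤ)) := by
        simp only [ne_eq, Prod.mk.injEq, not_and]; intro h; omega
      have hd2 : (c + c.sign, (0:ℤ)) ≠ (c, (-1:ℤ)) := by
        simp only [ne_eq, Prod.mk.injEq, not_and]; intro h; omega
      have hd3 : (c, (1:ℤ)) ≠ (c, (-1:ℤ)) := by
        simp only [ne_eq, Prod.mk.injEq, not_and]; intro h; omega
      rw [Finset.sum_insert (by simp [hd1, hd2]), Finset.sum_insert (by simp [hd3]),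
        Finset.sum_singleton, e1, e2, e3]
      simp only [dnorm, Int.natAbs_zero, add_zero, layerCard]
      rw [if_neg (by omega), if_neg (by omega)]
      have hA' : (1:ℝ) ≤ (c.natAbs : ℝ) := by exact_mod_cast hA
      rw [← hck]
      push_cast
      have hAne : (c.natAbs:ℝ) ≠ 0 := by linarith
      field_simp
      ring
    · intro x hx h'
      simp only [Finset.mem_insert, Finset.mem_singleton]
      rcases Qin_shape h' with ⟨hxo, hyo⟩ | ⟨hx1, hx2, hy|hy⟩ | ⟨hx1, hx2, hy⟩ | ⟨hx1, hx2, hy⟩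
      · rw [Prod.ext_iff] at hyo; exact absurd hyo.1 hc
      · rw [Prod.ext_iff] at hy
        obtain ⟨hy1, hy2⟩ := hy
        have := (sub_sign_zero_iff x.2).mp hy2.symm
        have hx2' : x.2 = 1 ∨ x.2 = -1 := by tauto
        rcases hx2' with h'' | h''
        · exact Or.inr (Or.inl (Prod.ext hy1.symm h''))
        · exact Or.inr (Or.inr (Prod.ext hy1.symm h''))
      · rw [Prod.ext_iff] at hy; exact absurd hy.2.symm hx2
      · rw [Prod.ext_iff] at hy
        obtain ⟨hy1, hy2⟩ := hy
        exact Or.inl (Prod.ext (sub_sign_inv hx1 hy1.symm hc).symm hx2)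
      · rw [Prod.ext_iff] at hy; exact absurd hy.1 hc
    · intro x hx
      simp only [Finset.mem_insert, Finset.mem_singleton] at hx
      have hn := natAbs_add_sign hc
      rcases hx with rfl | rfl | rfl <;> simp only [dnorm] <;> omega
  · -- interior y = (c, d)
    have hA : 1 ≤ c.natAbs := Int.natAbs_pos.mpr hc
    have hB : 1 ≤ d.natAbs := Int.natAbs_pos.mpr hd
    have hcdk : c.natAbs + d.natAbs + 1 = k := by simpa [dnorm] using h1
    rw [tsum_layer_eq_sum_s16 (fun x => Qin x (c, d))
      ({(c + c.sign, d), (c, d + d.sign)} : Finset Z2) ?_ ?_]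
    · have hA' : (1:ℝ) ≤ (c.natAbs : ℝ) := by exact_mod_cast hA
      have hB' : (1:ℝ) ≤ (d.natAbs : ℝ) := by exact_mod_cast hB
      have e1 : Qin (c + c.sign, d) (c, d) =
          ((c.natAbs:ℝ) + 1/2) / ((c.natAbs:ℝ) + (d.natAbs:ℝ)) := by
        have hv := Qin_int_left (a := c + c.sign) (b := d) (add_sign_ne_zero hc) hd
        rw [sign_add_sign hc, show c + c.sign - c.sign = c from by ring,
          natAbs_add_sign hc] at hv
        rw [hv]
        push_cast
        rw [div_eq_div_iff (by linarith) (by linarith)]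
        ring
      have e2 : Qin (c, d + d.sign) (c, d) =
          ((d.natAbs:ℝ) + 1/2) / ((c.natAbs:ℝ) + (d.natAbs:ℝ)) := by
        have hv := Qin_int_down (a := c) (b := d + d.sign) hc (add_sign_ne_zero hd)
        rw [sign_add_sign hd, show d + d.sign - d.sign = d from by ring,
          natAbs_add_sign hd] at hv
        rw [hv]
        push_cast
        rw [div_eq_div_iff (by linarith) (by linarith)]
        ring
      have hne : (c + c.sign, d) ≠ (c, d + d.sign) := by
        simp only [ne_eq, Prod.mk.injEq, not_and]
        intro h
        exact absurd (by linarith : c.sign = 0) (isign_ne_zero hc)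
      rw [Finset.sum_insert (by simp [hne]), Finset.sum_singleton, e1, e2,
        ← add_div]
      simp only [dnorm, layerCard]
      rw [if_neg (by omega)]
      simp only [show c.natAbs + d.natAbs ≠ 0 by omega, ↓reduceIte]
      rw [← hcdk]
      push_cast
      rw [div_eq_div_iff (by linarith) (by linarith)]
      ring
    · intro x hx h'
      simp only [Finset.mem_insert, Finset.mem_singleton]
      rcases Qin_shape h' with ⟨hxo, hyo⟩ | ⟨hx1, hx2, hy|hy⟩ | ⟨hx1, hx2, hy⟩ | ⟨hx1, hx2, hy⟩
      · rw [Prod.ext_iff] at hyo; exact absurd hyo.1 hc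
      · rw [Prod.ext_iff] at hy
        obtain ⟨hy1, hy2⟩ := hy
        exact Or.inr (Prod.ext hy1.symm (sub_sign_inv hx2 hy2.symm hd).symm)
      · rw [Prod.ext_iff] at hy
        obtain ⟨hy1, hy2⟩ := hy
        exact Or.inl (Prod.ext (sub_sign_inv hx1 hy1.symm hc).symm hy2.symm)
      · rw [Prod.ext_iff] at hy; exact absurd hy.2 hd
      · rw [Prod.ext_iff] at hy; exact absurd hy.1 hc
    · intro x hx
      simp only [Finset.mem_insert, Finset.mem_singleton] at hx
      have hn1 := natAbs_add_sign hc
      have hn2 := natAbs_add_sign hd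
      rcases hx with rfl | rfl <;> simp only [dnorm] <;> omega

end ColIn
/-- **Lemma.** For every `p ∈ [0,1)`, the kernel `Q_p = p·Q_in + (1−p)·Q_out` is a
uniformly layered walk kernel: it is a Markov kernel satisfying (U1), (U2), (U3). -/
theorem statement16 (p : ℝ) (hp : p ∈ Set.Ico (0 : ℝ) 1) : IsULW (Qp p) := by
  obtain ⟨hp0, hp1⟩ := hp
  have hp1' : 0 < 1 - p := by linarith
  refine ⟨?_, ?_, ?_, ?_, ?_⟩
  · -- nonneg
    intro x y
    exact add_nonneg (mul_nonneg hp0 (Qin_nonneg x y))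
      (mul_nonneg (by linarith) (Qout_nonneg x y))
  · -- row sums
    intro x
    unfold Qp
    rw [Summable.tsum_add ((summable_Qin_row x).mul_left p) ((summable_Qout_row x).mul_left (1-p)),
      tsum_mul_left, tsum_mul_left, Qin_rowsum, Qout_rowsum]
    ring
  · -- (U1)
    intro x y h
    have h1 : Qin x y = 0 := by
      by_contra h'
      rcases Qin_dnorm h' with h2 | ⟨h2, h3⟩
      · omega
      · rw [h2, h3, dnorm_origin] at h; omega
    have h2 : Qout x y = 0 := by
      by_contra h'
      have := Qout_dnorm h'
      omega
    unfold Qp; rw [h1, h2]; ring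
  · -- (U2)
    intro x
    obtain ⟨a, b⟩ := x
    rcases eq_or_ne a 0 with rfl | ha <;> rcases eq_or_ne b 0 with rfl | hb
    · refine ⟨((1:ℤ),(0:ℤ)), by decide, ?_⟩
      have e1 : Qin ((0:ℤ),(0:ℤ)) (1,0) = 0 := by
        rw [show (((0:ℤ),(0:ℤ)) : Z2) = origin from rfl, Qin_origin_eval,
          if_neg (by decide)]
      have e2 : Qout ((0:ℤ),(0:ℤ)) (1,0) = 1/4 := by
        rw [show (((0:ℤ),(0:ℤ)) : Z2) = origin from rfl, Qout_origin_eval,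
          if_pos (by decide)]
      unfold Qp; rw [e1, e2]; nlinarith
    · refine ⟨((1:ℤ), b), by simp only [dnorm]; omega, ?_⟩
      have e1 : Qin ((0:ℤ), b) (1, b) = 0 := by
        rw [Qin_yaxis_eval hb, if_neg]
        simp only [Prod.mk.injEq, not_and]
        intro h; omega
      have e2 : Qout ((0:ℤ), b) (1, b) = 1/2/((b.natAbs:ℝ)+1) :=
        Qout_yaxis_horiz hb (Or.inl rfl)
      unfold Qp; rw [e1, e2, mul_zero, zero_add]
      exact mul_pos hp1' (by positivity)
    · refine ⟨(a, (1:ℤ)), by simp only [dnorm]; omega, ?_⟩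
      have e1 : Qin (a, (0:ℤ)) (a, 1) = 0 := by
        rw [Qin_axis_eval ha, if_neg]
        simp only [Prod.mk.injEq, not_and]
        intro _ ; omega
      have e2 : Qout (a, (0:ℤ)) (a, 1) = 1/2/((a.natAbs:ℝ)+1) :=
        Qout_axis_vert ha (Or.inl rfl)
      unfold Qp; rw [e1, e2, mul_zero, zero_add]
      exact mul_pos hp1' (by positivity)
    · refine ⟨(a + a.sign, b), ?_, ?_⟩
      · simp only [dnorm]; rw [natAbs_add_sign ha]; omega
      · have hdy : dnorm (a + a.sign, b) = dnorm (a, b) + 1 := by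
          simp only [dnorm]; rw [natAbs_add_sign ha]; omega
        have e1 : Qin (a, b) (a + a.sign, b) = 0 := by
          by_contra h'
          rcases Qin_dnorm h' with h2 | ⟨h2, _⟩
          · omega
          · exact (pair_ne_origin ha) h2
        have e2 := Qout_int_right ha hb
        unfold Qp; rw [e1, e2, mul_zero, zero_add]
        exact mul_pos hp1' (by positivity)
  · -- (U3)
    intro k y z h
    have key : ∀ w : Z2, ∑' x : layer k, Qp p x.1 w =
        p * (if dnorm w = 0 ∧ k = 0 then 1
            else if dnorm w + 1 = k then (layerCard k : ℝ)/(layerCard (dnorm w) : ℝ)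
            else 0)
        + (1 - p) * (if dnorm w = k + 1 then (layerCard k : ℝ)/(layerCard (k+1) : ℝ)
            else 0) := by
      intro w
      have hs1 : Summable (fun x : layer k => p * Qin x.1 w) := by
        apply Summable.mul_left
        exact (summable_Qin_col w).subtype _
      have hs2 : Summable (fun x : layer k => (1 - p) * Qout x.1 w) := by
        apply Summable.mul_left
        exact (summable_Qout_col w).subtype _
      unfold Qp
      rw [Summable.tsum_add hs1 hs2, tsum_mul_left, tsum_mul_left, colQin, colQout]
    rw [key y, key z, h]
end
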